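/- arXiv:2108.04598 — 9 statements merged into one kernel-verified Lean document; each statement's English description precedes it below -/
import Mathlib

section
/- With X = ℓ^p_α and Y = ℝ^ℕ as above, the Borel σ-algebra of X equals the trace σ-algebra {B ∩ X : B Borel in Y}. -/
open MeasureTheory

/-- The weighted sequence space `ℓ^p_α` as a subset of `ℝ^ℕ`. -/
def weightedLp (p : ℝ) (α : ℕ → ℝ) : Set (ℕ → ℝ) :=
  {x | Summable fun k => |x k / α k| ^ p}

/-- The `ℓ^p_α`-distance. -/
noncomputable def weightedLpDist (p : ℝ) (α : ℕ → ℝ) (x y : ℕ → ℝ) : ℝ :=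
  (∑' k, |(x k - y k) / α k| ^ p) ^ (1 / p)

/-- The norm topology on `ℓ^p_α`, generated by the open balls. -/
noncomputable def weightedLpTopology (p : ℝ) (α : ℕ → ℝ) :
    TopologicalSpace (weightedLp p α) :=
  TopologicalSpace.generateFrom
    {U | ∃ (z : weightedLp p α) (r : ℝ), 0 < r ∧
      U = {x : weightedLp p α | weightedLpDist p α (x : ℕ → ℝ) (z : ℕ → ℝ) < r}}

-- Auxiliary lemmas
open scoped ENNReal NNReal

section aux
variable {p : ℝ} (hp : 1 ≤ p) {α : ℕ → ℝ} (hα : ∀ k, 0 < α k)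

lemma toReal_ofReal_p (hp : 1 ≤ p) : (ENNReal.ofReal p).toReal = p :=
  ENNReal.toReal_ofReal (le_trans zero_le_one hp)

lemma mem_weightedLp_iff (hp : 1 ≤ p) (x : ℕ → ℝ) :
    x ∈ weightedLp p α ↔ Memℓp (fun k => x k / α k) (ENNReal.ofReal p) := by
  have h0 : 0 < (ENNReal.ofReal p).toReal := by
    rw [toReal_ofReal_p hp]; linarith
  rw [memℓp_gen_iff h0, toReal_ofReal_p hp]
  simp only [weightedLp, Set.mem_setOf_eq, Real.norm_eq_abs]

noncomputable def Phi (hp : 1 ≤ p) (α : ℕ → ℝ) (x : weightedLp p α) :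
    lp (fun _ : ℕ => ℝ) (ENNReal.ofReal p) :=
  ⟨fun k => x.1 k / α k, (mem_weightedLp_iff hp x.1).1 x.2⟩

lemma Phi_apply (x : weightedLp p α) (k : ℕ) : (Phi hp α x : ℕ → ℝ) k = x.1 k / α k := rfl

lemma Phi_surjective (hα : ∀ k, 0 < α k) : Function.Surjective (Phi hp α) := by
  intro f
  have hx : (fun k => f k * α k) ∈ weightedLp p α := by
    rw [mem_weightedLp_iff hp]
    have : (fun k => (f k * α k) / α k) = fun k => (f : ℕ → ℝ) k := by
      funext k; rw [mul_div_assoc, div_self (hα k).ne', mul_one]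
    rw [this]
    exact lp.memℓp f
  refine ⟨⟨fun k => f k * α k, hx⟩, ?_⟩
  apply Subtype.ext
  funext k
  show f k * α k / α k = (f : ℕ → ℝ) k
  rw [mul_div_assoc, div_self (hα k).ne', mul_one]

lemma dist_Phi (x y : weightedLp p α) :
    haveI : Fact (1 ≤ ENNReal.ofReal p) := ⟨ENNReal.one_le_ofReal.2 hp⟩
    dist (Phi hp α x) (Phi hp α y) = weightedLpDist p α x.1 y.1 := by
  haveI : Fact (1 ≤ ENNReal.ofReal p) := ⟨ENNReal.one_le_ofReal.2 hp⟩
  have h0 : 0 < (ENNReal.ofReal p).toReal := by rw [toReal_ofReal_p hp]; linarith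
  rw [dist_eq_norm, lp.norm_eq_tsum_rpow h0, toReal_ofReal_p hp]
  unfold weightedLpDist
  congr 1
  apply tsum_congr
  intro k
  have : ((Phi hp α x - Phi hp α y : lp (fun _ : ℕ => ℝ) (ENNReal.ofReal p)) : ℕ → ℝ) k
      = (x.1 k - y.1 k) / α k := by
    simp [Phi, sub_div]
    rfl
  rw [this, Real.norm_eq_abs]

end aux

section sep
variable {p : ℝ}

lemma lp_single_sub (p' : ℝ≥0∞) (i : ℕ) (a b : ℝ) :
    lp.single (E := fun _ : ℕ => ℝ) p' i (a - b) = lp.single p' i a - lp.single p' i b := by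
  apply Subtype.ext
  funext j
  have : ((lp.single (E := fun _ : ℕ => ℝ) p' i a - lp.single p' i b : lp _ p') : ℕ → ℝ) j
      = lp.single (E := fun _ : ℕ => ℝ) p' i a j - lp.single (E := fun _ : ℕ => ℝ) p' i b j := rfl
  show lp.single (E := fun _ : ℕ => ℝ) p' i (a - b) j = _
  rw [this]
  by_cases h : j = i
  · subst h; simp [lp.single_apply_self]
  · simp [lp.single_apply_ne _ _ _ h]

noncomputable def Tmap (p' : ℝ≥0∞) : (Σ n : ℕ, Fin n → ℚ) → lp (fun _ : ℕ => ℝ) p' :=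
  fun nq => ∑ i ∈ Finset.range nq.1,
    lp.single p' i (if h : i < nq.1 then ((nq.2 ⟨i, h⟩ : ℝ)) else 0)

lemma lp_separable (hp : 1 ≤ p) :
    haveI : Fact (1 ≤ ENNReal.ofReal p) := ⟨ENNReal.one_le_ofReal.2 hp⟩
    TopologicalSpace.SeparableSpace (lp (fun _ : ℕ => ℝ) (ENNReal.ofReal p)) := by
  haveI : Fact (1 ≤ ENNReal.ofReal p) := ⟨ENNReal.one_le_ofReal.2 hp⟩
  have h0 : 0 < (ENNReal.ofReal p).toReal := by rw [toReal_ofReal_p hp]; linarith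
  refine ⟨⟨Set.range (Tmap (ENNReal.ofReal p)), Set.countable_range _, ?_⟩⟩
  have : DenseRange (Tmap (ENNReal.ofReal p)) := by
    rw [Metric.denseRange_iff]
    intro f ε hε
    have hsum := (lp.hasSum_single (ENNReal.ofReal_ne_top) f).tendsto_sum_nat
    obtain ⟨n, h1⟩ := (Metric.tendsto_atTop.1 hsum (ε/2) (by linarith) : ∃ N, ∀ m ≥ N, _)
      |>.imp (fun N h => h N le_rfl)
    replace h1 : dist (∑ i ∈ Finset.range n, lp.single (ENNReal.ofReal p) i (f i)) f < ε/2 := h1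
    set δ := ε / (2 * (n + 1)) with hδ
    have hδpos : 0 < δ := by positivity
    have hq : ∀ i : Fin n, ∃ q : ℚ, |f (i : ℕ) - q| < δ := fun i => exists_rat_near _ hδpos
    choose q hqlt using hq
    refine ⟨⟨n, q⟩, ?_⟩
    have h2 : dist (∑ i ∈ Finset.range n, lp.single (ENNReal.ofReal p) i (f i))
        (Tmap (ENNReal.ofReal p) ⟨n, q⟩) < ε / 2 := by
      rw [dist_eq_norm, Tmap, ← Finset.sum_sub_distrib]
      have heq : ∀ i ∈ Finset.range n,
          lp.single (E := fun _ : ℕ => ℝ) (ENNReal.ofReal p) i (f i)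
            - lp.single (ENNReal.ofReal p) i (if h : i < n then ((q ⟨i, h⟩ : ℝ)) else 0)
          = lp.single (ENNReal.ofReal p) i
              (f i - if h : i < n then ((q ⟨i, h⟩ : ℝ)) else 0) := by
        intro i _
        rw [lp_single_sub]
      rw [Finset.sum_congr rfl heq]
      calc ‖∑ i ∈ Finset.range n, lp.single (ENNReal.ofReal p) i
              (f i - if h : i < n then ((q ⟨i, h⟩ : ℝ)) else 0)‖
          ≤ ∑ i ∈ Finset.range n, ‖lp.single (E := fun _ : ℕ => ℝ) (ENNReal.ofReal p) i
              (f i - if h : i < n then ((q ⟨i, h⟩ : ℝ)) else 0)‖ := norm_sum_le _ _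
        _ ≤ ∑ _i ∈ Finset.range n, δ := by
            apply Finset.sum_le_sum
            intro i hi
            have hin : i < n := Finset.mem_range.1 hi
            have := lp.norm_single (E := fun _ : ℕ => ℝ) (p := ENNReal.ofReal p) (ENNReal.ofReal_pos.2 (by linarith)) i
              (f i - if h : i < n then ((q ⟨i, h⟩ : ℝ)) else 0)
            rw [this, dif_pos hin]
            exact le_of_lt (by simpa using hqlt ⟨i, hin⟩)
        _ < ε / 2 := by
            rw [Finset.sum_const, Finset.card_range, nsmul_eq_mul, hδ]
            rw [mul_div_assoc'] at *
            rw [div_lt_div_iff₀ (by positivity) (by norm_num)]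
            nlinarith [Nat.cast_nonneg (α := ℝ) n, hε]
    calc dist f (Tmap (ENNReal.ofReal p) ⟨n, q⟩)
        ≤ dist f (∑ i ∈ Finset.range n, lp.single (ENNReal.ofReal p) i (f i))
          + dist (∑ i ∈ Finset.range n, lp.single (ENNReal.ofReal p) i (f i))
            (Tmap (ENNReal.ofReal p) ⟨n, q⟩) := dist_triangle _ _ _
      _ < ε/2 + ε/2 := add_lt_add (by rw [dist_comm]; exact h1) h2
      _ = ε := by ring
  exact this
end sep


section main
variable {p : ℝ} {α : ℕ → ℝ}

lemma topology_eq (hp : 1 ≤ p) (hα : ∀ k, 0 < α k) :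
    haveI : Fact (1 ≤ ENNReal.ofReal p) := ⟨ENNReal.one_le_ofReal.2 hp⟩
    weightedLpTopology p α = TopologicalSpace.induced (Phi hp α) inferInstance := by
  haveI : Fact (1 ≤ ENNReal.ofReal p) := ⟨ENNReal.one_le_ofReal.2 hp⟩
  have hb : TopologicalSpace.IsTopologicalBasis
      {s : Set (lp (fun _ : ℕ => ℝ) (ENNReal.ofReal p)) | ∃ c r, 0 < r ∧ s = Metric.ball c r} := by
    refine TopologicalSpace.isTopologicalBasis_of_isOpen_of_nhds ?_ ?_
    · rintro s ⟨c, r, hr, rfl⟩; exact Metric.isOpen_ball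
    · intro x u hx hu
      obtain ⟨r, hr, hsub⟩ := Metric.isOpen_iff.1 hu x hx
      exact ⟨Metric.ball x r, ⟨x, r, hr, rfl⟩, Metric.mem_ball_self hr, hsub⟩
  rw [weightedLpTopology, hb.eq_generateFrom, induced_generateFrom_eq]
  congr 1
  ext U
  constructor
  · rintro ⟨z, r, hr, rfl⟩
    refine ⟨Metric.ball (Phi hp α z) r, ⟨_, r, hr, rfl⟩, ?_⟩
    ext x
    simp only [Set.mem_preimage, Metric.mem_ball, Set.mem_setOf_eq, dist_Phi hp]
  · rintro ⟨s, ⟨c, r, hr, rfl⟩, rfl⟩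
    obtain ⟨z, rfl⟩ := Phi_surjective hp hα c
    refine ⟨z, r, hr, ?_⟩
    ext x
    simp only [Set.mem_preimage, Metric.mem_ball, Set.mem_setOf_eq, dist_Phi hp]

lemma coord_measurable (k : ℕ) :
    @Measurable _ _ (MeasurableSpace.comap (Subtype.val : weightedLp p α → (ℕ → ℝ))
      (borel (ℕ → ℝ))) _ (fun x : weightedLp p α => x.1 k) := by
  have hval : @Measurable _ _ (MeasurableSpace.comap
      (Subtype.val : weightedLp p α → (ℕ → ℝ)) (borel (ℕ → ℝ))) _
      (Subtype.val : weightedLp p α → (ℕ → ℝ)) := by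
    rw [measurable_iff_comap_le, BorelSpace.measurable_eq (α := ℕ → ℝ)]
  exact (measurable_pi_apply k).comp hval

lemma ball_meas (hp : 1 ≤ p) (hα : ∀ k, 0 < α k)
    (c : lp (fun _ : ℕ => ℝ) (ENNReal.ofReal p)) (r : ℝ) (hr : 0 < r) :
    MeasurableSet[MeasurableSpace.comap (Subtype.val : weightedLp p α → (ℕ → ℝ))
      (borel (ℕ → ℝ))]
      (haveI : Fact (1 ≤ ENNReal.ofReal p) := ⟨ENNReal.one_le_ofReal.2 hp⟩;
        Phi hp α ⁻¹' Metric.ball c r) := by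
  haveI : Fact (1 ≤ ENNReal.ofReal p) := ⟨ENNReal.one_le_ofReal.2 hp⟩
  have h0 : 0 < (ENNReal.ofReal p).toReal := by rw [toReal_ofReal_p hp]; linarith
  have hp0 : 0 < p := by linarith
  set M := MeasurableSpace.comap (Subtype.val : weightedLp p α → (ℕ → ℝ)) (borel (ℕ → ℝ))
  set g : weightedLp p α → ℝ≥0∞ :=
    fun x => ∑' k, ENNReal.ofReal (|x.1 k / α k - c k| ^ p) with hg
  have hgm : @Measurable _ _ M _ g := by
    apply Measurable.ennreal_tsum
    intro k
    have hc : Continuous fun t : ℝ => ENNReal.ofReal (|t / α k - c k| ^ p) := by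
      apply ENNReal.continuous_ofReal.comp
      exact (((continuous_id.div_const (α k)).sub continuous_const).abs).rpow_const
        (fun t => Or.inr (by linarith))
    exact hc.measurable.comp (coord_measurable k)
  have key : Phi hp α ⁻¹' Metric.ball c r = g ⁻¹' (Set.Iio (ENNReal.ofReal (r ^ p))) := by
    ext x
    have hcoord : ∀ k, ((Phi hp α x - c : lp (fun _ : ℕ => ℝ) (ENNReal.ofReal p)) : ℕ → ℝ) k
        = x.1 k / α k - c k := fun k => rfl
    have hS : Summable fun k =>
        ‖((Phi hp α x - c : lp (fun _ : ℕ => ℝ) (ENNReal.ofReal p)) : ℕ → ℝ) k‖ ^ p := by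
      have := (lp.hasSum_norm h0 (Phi hp α x - c)).summable
      rwa [toReal_ofReal_p hp] at this
    have hgx : g x = ENNReal.ofReal (∑' k,
        ‖((Phi hp α x - c : lp (fun _ : ℕ => ℝ) (ENNReal.ofReal p)) : ℕ → ℝ) k‖ ^ p) := by
      rw [ENNReal.ofReal_tsum_of_nonneg (fun k => Real.rpow_nonneg (norm_nonneg _) p) hS]
      apply tsum_congr
      intro k
      rw [hcoord k, Real.norm_eq_abs]
    have hdist : dist (Phi hp α x) c
        = (∑' k, ‖((Phi hp α x - c : lp (fun _ : ℕ => ℝ) (ENNReal.ofReal p)) : ℕ → ℝ) k‖ ^ p)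
          ^ (1 / p) := by
      rw [dist_eq_norm, lp.norm_eq_tsum_rpow h0, toReal_ofReal_p hp]
    set S := ∑' k, ‖((Phi hp α x - c : lp (fun _ : ℕ => ℝ) (ENNReal.ofReal p)) : ℕ → ℝ) k‖ ^ p
      with hSdef
    have hSnn : 0 ≤ S := tsum_nonneg fun k => Real.rpow_nonneg (norm_nonneg _) p
    simp only [Set.mem_preimage, Metric.mem_ball, Set.mem_Iio, hgx, hdist]
    rw [ENNReal.ofReal_lt_ofReal_iff (Real.rpow_pos_of_pos hr p)]
    have hrp : (r ^ p) ^ (1/p) = r := by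
      rw [← Real.rpow_mul hr.le, mul_one_div, div_self hp0.ne', Real.rpow_one]
    conv_lhs => rw [← hrp]
    exact Real.rpow_lt_rpow_iff hSnn (Real.rpow_nonneg hr.le p) (by positivity)
  rw [key]
  exact hgm measurableSet_Iio

end main

/-- The Borel σ-algebra of `ℓ^p_α` equals the trace of the Borel σ-algebra of
`ℝ^ℕ` (with the product topology) on `ℓ^p_α`. -/
theorem stmt1 (p : ℝ) (hp : 1 ≤ p) (α : ℕ → ℝ) (hα : ∀ k, 0 < α k) :
    @borel (weightedLp p α) (weightedLpTopology p α)
      = MeasurableSpace.comap (Subtype.val : weightedLp p α → (ℕ → ℝ))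
          (borel (ℕ → ℝ)) := by
  haveI : Fact (1 ≤ ENNReal.ofReal p) := ⟨ENNReal.one_le_ofReal.2 hp⟩
  haveI : TopologicalSpace.SeparableSpace (lp (fun _ : ℕ => ℝ) (ENNReal.ofReal p)) :=
    lp_separable hp
  haveI : SecondCountableTopology (lp (fun _ : ℕ => ℝ) (ENNReal.ofReal p)) :=
    UniformSpace.secondCountable_of_separable _
  rw [topology_eq hp hα, borel_comap]
  letI mE : MeasurableSpace (lp (fun _ : ℕ => ℝ) (ENNReal.ofReal p)) := borel _
  haveI : BorelSpace (lp (fun _ : ℕ => ℝ) (ENNReal.ofReal p)) := ⟨rfl⟩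
  apply le_antisymm
  · letI m1 : MeasurableSpace (weightedLp p α) :=
      MeasurableSpace.comap (Subtype.val : weightedLp p α → (ℕ → ℝ)) (borel (ℕ → ℝ))
    have hmeas : Measurable (Phi hp α) := by
      apply measurable_generateFrom
      intro U hU
      simp only [Set.mem_setOf_eq] at hU
      have hUeq : U = ⋃ i : {cr : (lp (fun _ : ℕ => ℝ) (ENNReal.ofReal p)) × ℝ //
          0 < cr.2 ∧ Metric.ball cr.1 cr.2 ⊆ U}, Metric.ball i.1.1 i.1.2 := by
        apply subset_antisymm
        · intro x hx
          obtain ⟨r, hr, hsub⟩ := Metric.isOpen_iff.1 hU x hx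
          exact Set.mem_iUnion.2 ⟨⟨(x, r), hr, hsub⟩, Metric.mem_ball_self hr⟩
        · exact Set.iUnion_subset fun i => i.2.2
      obtain ⟨T, hTc, hTU⟩ := TopologicalSpace.isOpen_iUnion_countable
        (fun i : {cr : (lp (fun _ : ℕ => ℝ) (ENNReal.ofReal p)) × ℝ //
          0 < cr.2 ∧ Metric.ball cr.1 cr.2 ⊆ U} => Metric.ball i.1.1 i.1.2)
        (fun i => Metric.isOpen_ball)
      have hpre : Phi hp α ⁻¹' U = ⋃ i ∈ T, Phi hp α ⁻¹' Metric.ball i.1.1 i.1.2 := by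
        have h3 := congrArg (Set.preimage (Phi hp α)) (hUeq.trans hTU.symm)
        simpa [Set.preimage_iUnion] using h3
      rw [hpre]
      exact MeasurableSet.biUnion hTc fun i _ => ball_meas hp hα i.1.1 i.1.2 i.2.1
    exact hmeas.comap_le
  · letI m2 : MeasurableSpace (weightedLp p α) :=
      MeasurableSpace.comap (Phi hp α)
        (borel (lp (fun _ : ℕ => ℝ) (ENNReal.ofReal p)))
    have hPhi : Measurable (Phi hp α) := Measurable.of_comap_le le_rfl
    have hval : Measurable (Subtype.val : weightedLp p α → (ℕ → ℝ)) := by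
      rw [measurable_pi_iff]
      intro k
      have heq : (fun x : weightedLp p α => x.1 k)
          = (fun f : lp (fun _ : ℕ => ℝ) (ENNReal.ofReal p) => α k * f k) ∘ (Phi hp α) := by
        funext x
        show x.1 k = α k * (x.1 k / α k)
        rw [mul_comm, div_mul_cancel₀ _ (hα k).ne']
      rw [heq]
      have hL : LipschitzWith 1
          (fun f : lp (fun _ : ℕ => ℝ) (ENNReal.ofReal p) => (f : ℕ → ℝ) k) := by
        apply LipschitzWith.of_dist_le_mul
        intro f g
        simp only [NNReal.coe_one, one_mul]
        rw [dist_eq_norm, dist_eq_norm]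
        have := lp.norm_apply_le_norm
          (show (ENNReal.ofReal p) ≠ 0 from (ENNReal.ofReal_pos.2 (by linarith)).ne') (f - g) k
        simpa using this
      have hcont : Continuous
          (fun f : lp (fun _ : ℕ => ℝ) (ENNReal.ofReal p) => α k * (f : ℕ → ℝ) k) :=
        continuous_const.mul hL.continuous
      exact hcont.measurable.comp hPhi
    have h2 := hval.comap_le
    rwa [BorelSpace.measurable_eq (α := ℕ → ℝ)] at h2
end

section
/- Let (u_k) be i.i.d. real random variables with common distribution given by a probability density ρ on ℝ, let γ_k, α_k > 0, and suppose that Σ_k |γ_k u_k / α_k|^p < ∞ almost surely for some 1 ≤ p < ∞. Then γ_k/α_k → 0 as k → ∞, and Σ_k (γ_k/α_k)^p < ∞. -/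
open MeasureTheory Filter

private lemma min_mul_min_le_aux {a b : ℝ} (ha : 0 ≤ a) (hb : 0 ≤ b) :
    min a 1 * min b 1 ≤ min (a * b) 1 := by
  have hb' : (0:ℝ) ≤ min b 1 := le_min hb zero_le_one
  refine le_min (mul_le_mul (min_le_left _ _) (min_le_left _ _) hb' ha) ?_
  calc min a 1 * min b 1 ≤ 1 * 1 :=
        mul_le_mul (min_le_right _ _) (min_le_right _ _) hb' zero_le_one
    _ = 1 := one_mul 1

private lemma exp_neg_le_aux {t : ℝ} (h0 : 0 ≤ t) (h1 : t ≤ 1) :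
    Real.exp (-t) ≤ 1 - (1 - Real.exp (-1)) * t := by
  have := convexOn_exp.2 (Set.mem_univ (0:ℝ)) (Set.mem_univ (-1:ℝ))
    (by linarith : (0:ℝ) ≤ 1 - t) h0 (by ring)
  simp only [smul_eq_mul, mul_zero, mul_neg, mul_one, zero_add, Real.exp_zero] at this
  calc Real.exp (-t) ≤ (1 - t) * 1 + t * Real.exp (-1) := by
        linarith
    _ = 1 - (1 - Real.exp (-1)) * t := by ring

/-- If `(u k)` are i.i.d. real random variables whose common law has an everywhere
positive density `ρ`, and `∑ k, |γ k * u k / α k| ^ p < ∞` almost surely for some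
`1 ≤ p < ∞`, then `γ k / α k → 0` and `∑ k (γ k / α k) ^ p < ∞`. -/
theorem stmt2 {Ω : Type*} [MeasurableSpace Ω] (P : Measure Ω) [IsProbabilityMeasure P]
    (u : ℕ → Ω → ℝ) (hmeas : ∀ k, Measurable (u k))
    (hindep : ProbabilityTheory.iIndepFun u P)
    (ρ : ℝ → ℝ) (hρmeas : Measurable ρ) (hρpos : ∀ y, 0 < ρ y)
    (hlaw : ∀ k, P.map (u k) = volume.withDensity (fun y => ENNReal.ofReal (ρ y)))
    (γ α : ℕ → ℝ) (hγ : ∀ k, 0 < γ k) (hα : ∀ k, 0 < α k)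
    (p : ℝ) (hp : 1 ≤ p)
    (hsum : ∀ᵐ ω ∂P, Summable fun k => |γ k * u k ω / α k| ^ p) :
    Tendsto (fun k => γ k / α k) atTop (nhds 0) ∧
      Summable fun k => (γ k / α k) ^ p := by
  have hppos : (0:ℝ) < p := lt_of_lt_of_le one_pos hp
  set c : ℕ → ℝ := fun k => γ k / α k with hc
  have hcpos : ∀ k, 0 < c k := fun k => div_pos (hγ k) (hα k)
  -- the truncated variables
  set g : ℕ → ℝ → ℝ := fun k y => min (|γ k * y / α k| ^ p) 1 with hgdef
  have hgmeas : ∀ k, Measurable (g k) := by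
    intro k
    exact (((measurable_id.const_mul (γ k)).div_const (α k)).abs.pow measurable_const).min measurable_const
  have hg0 : ∀ k y, 0 ≤ g k y :=
    fun k y => le_min (Real.rpow_nonneg (abs_nonneg _) p) zero_le_one
  have hg1 : ∀ k y, g k y ≤ 1 := fun k y => min_le_right _ _
  set X : ℕ → Ω → ℝ := fun k => g k ∘ u k with hXdef
  have hXmeas : ∀ k, Measurable (X k) := fun k => (hgmeas k).comp (hmeas k)
  have hX0 : ∀ k ω, 0 ≤ X k ω := fun k ω => hg0 k _
  have hX1 : ∀ k ω, X k ω ≤ 1 := fun k ω => hg1 k _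
  have hXint : ∀ k, Integrable (X k) P := by
    intro k
    refine (integrable_const (1:ℝ)).mono' (hXmeas k).aestronglyMeasurable ?_
    filter_upwards with ω
    rw [Real.norm_eq_abs, abs_of_nonneg (hX0 k ω)]
    exact hX1 k ω
  -- a.s. the X's are summable
  have hXsum : ∀ᵐ ω ∂P, Summable fun k => X k ω := by
    filter_upwards [hsum] with ω hω
    exact hω.of_nonneg_of_le (fun k => hX0 k ω) (fun k => min_le_left _ _)
  -- the exponential variables
  set Y : ℕ → Ω → ℝ := fun k => (fun y => Real.exp (-(g k y))) ∘ u k with hYdef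
  have hYmeas : ∀ k, Measurable (Y k) :=
    fun k => (Real.measurable_exp.comp ((hgmeas k).comp (hmeas k)).neg)
  have hYindep : ProbabilityTheory.iIndepFun Y P :=
    hindep.comp (fun k y => Real.exp (-(g k y)))
      (fun k => Real.measurable_exp.comp (hgmeas k).neg)
  have hY0 : ∀ k ω, 0 ≤ Y k ω := fun k ω => (Real.exp_pos _).le
  have hY1 : ∀ k ω, Y k ω ≤ 1 := by
    intro k ω
    rw [show (1:ℝ) = Real.exp 0 by simp]
    exact Real.exp_le_exp.2 (by simpa using hg0 k (u k ω))
  have hYint : ∀ k, Integrable (Y k) P := by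
    intro k
    refine (integrable_const (1:ℝ)).mono' (hYmeas k).aestronglyMeasurable ?_
    filter_upwards with ω
    rw [Real.norm_eq_abs, abs_of_nonneg (hY0 k ω)]
    exact hY1 k ω
  -- finite products of Y's
  have hprodint : ∀ n, Integrable (fun ω => ∏ k ∈ Finset.range n, Y k ω) P := by
    intro n
    refine (integrable_const (1:ℝ)).mono'
      (Finset.measurable_prod _ fun k _ => hYmeas k).aestronglyMeasurable ?_
    filter_upwards with ω
    rw [Real.norm_eq_abs, abs_of_nonneg (Finset.prod_nonneg fun k _ => hY0 k ω)]
    exact Finset.prod_le_one (fun k _ => hY0 k ω) (fun k _ => hY1 k ω)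
  have hprod : ∀ n, ∫ ω, ∏ k ∈ Finset.range n, Y k ω ∂P
      = ∏ k ∈ Finset.range n, ∫ ω, Y k ω ∂P := by
    intro n
    induction n with
    | zero => simp
    | succ n ih =>
      have hind := hYindep.indepFun_prod_range_succ hYmeas n
      have e2 : (fun ω => ∏ k ∈ Finset.range n, Y k ω) = ∏ j ∈ Finset.range n, Y j :=
        (Finset.prod_fn _ _).symm
      have e1 : (fun ω => ∏ k ∈ Finset.range (n+1), Y k ω)
          = (∏ j ∈ Finset.range n, Y j) * Y n := by
        funext ω
        rw [Finset.prod_range_succ, Pi.mul_apply, Finset.prod_apply]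
      have h2 := hind.integral_mul_eq_mul_integral (e2 ▸ hprodint n).aestronglyMeasurable
        (hYint n).aestronglyMeasurable
      rw [Finset.prod_range_succ, ← ih, e1, e2]
      exact h2
  -- bound on the integral of Y k
  set κ : ℝ := 1 - Real.exp (-1) with hκdef
  have hκpos : 0 < κ := by
    have : Real.exp (-1) < Real.exp 0 := Real.exp_lt_exp.2 (by norm_num)
    simp only [Real.exp_zero] at this
    rw [hκdef]; linarith
  have hEYle : ∀ k, ∫ ω, Y k ω ∂P ≤ Real.exp (-(κ * ∫ ω, X k ω ∂P)) := by
    intro k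
    have h1 : ∫ ω, Y k ω ∂P ≤ ∫ ω, 1 - κ * X k ω ∂P := by
      refine integral_mono (hYint k) ((integrable_const 1).sub ((hXint k).const_mul κ)) ?_
      intro ω
      exact exp_neg_le_aux (hX0 k ω) (hX1 k ω)
    have h2 : ∫ ω, 1 - κ * X k ω ∂P = 1 - κ * ∫ ω, X k ω ∂P := by
      rw [integral_sub (integrable_const 1) ((hXint k).const_mul κ), integral_const,
        integral_const_mul]
      simp
    have h3 : 1 - κ * ∫ ω, X k ω ∂P ≤ Real.exp (-(κ * ∫ ω, X k ω ∂P)) := by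
      have := Real.add_one_le_exp (-(κ * ∫ ω, X k ω ∂P))
      linarith
    rw [h2] at h1
    linarith
  have hEY0 : ∀ k, 0 ≤ ∫ ω, Y k ω ∂P :=
    fun k => integral_nonneg fun ω => hY0 k ω
  have hEX0 : ∀ k, 0 ≤ ∫ ω, X k ω ∂P := fun k => integral_nonneg fun ω => hX0 k ω
  -- the key summability of the expectations
  have key : Summable fun k => ∫ ω, X k ω ∂P := by
    by_contra hns
    have htop : Tendsto (fun n => ∑ k ∈ Finset.range n, ∫ ω, X k ω ∂P) atTop atTop := by
      by_contra h
      exact hns ((summable_iff_not_tendsto_nat_atTop_of_nonneg hEX0).2 h)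
    have hub : ∀ n, ∫ ω, ∏ k ∈ Finset.range n, Y k ω ∂P
        ≤ Real.exp (-(κ * ∑ k ∈ Finset.range n, ∫ ω, X k ω ∂P)) := by
      intro n
      rw [hprod n]
      calc ∏ k ∈ Finset.range n, ∫ ω, Y k ω ∂P
          ≤ ∏ k ∈ Finset.range n, Real.exp (-(κ * ∫ ω, X k ω ∂P)) :=
            Finset.prod_le_prod (fun k _ => hEY0 k) (fun k _ => hEYle k)
        _ = Real.exp (∑ k ∈ Finset.range n, -(κ * ∫ ω, X k ω ∂P)) := (Real.exp_sum _ _).symm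
        _ = Real.exp (-(κ * ∑ k ∈ Finset.range n, ∫ ω, X k ω ∂P)) := by
            congr 1
            rw [Finset.mul_sum, ← Finset.sum_neg_distrib]
    have hto0 : Tendsto (fun n => ∫ ω, ∏ k ∈ Finset.range n, Y k ω ∂P) atTop (nhds 0) := by
      have hexp : Tendsto
          (fun n => Real.exp (-(κ * ∑ k ∈ Finset.range n, ∫ ω, X k ω ∂P))) atTop (nhds 0) :=
        Real.tendsto_exp_atBot.comp
          ((tendsto_neg_atTop_atBot).comp (htop.const_mul_atTop hκpos))
      refine tendsto_of_tendsto_of_tendsto_of_le_of_le tendsto_const_nhds hexp ?_ hub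
      exact fun n => integral_nonneg fun ω => Finset.prod_nonneg fun k _ => hY0 k ω
    -- a set of positive measure where the sum of the X's is bounded
    set G : Ω → ENNReal := fun ω => ∑' k, ENNReal.ofReal (X k ω) with hGdef
    have hGmeas : Measurable G :=
      Measurable.ennreal_tsum fun k => ENNReal.measurable_ofReal.comp (hXmeas k)
    set A : ℕ → Set Ω := fun M => {ω | G ω ≤ (M : ENNReal)} with hAdef
    have hAmeas : ∀ M, MeasurableSet (A M) := fun M => measurableSet_le hGmeas measurable_const
    have hcover : ∀ᵐ ω ∂P, ω ∈ ⋃ M, A M := by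
      filter_upwards [hXsum] with ω hω
      have hfin : G ω ≠ ⊤ := by
        rw [hGdef]
        simp only
        rw [← ENNReal.ofReal_tsum_of_nonneg (fun k => hX0 k ω) hω]
        exact ENNReal.ofReal_ne_top
      obtain ⟨M, hM⟩ := ENNReal.exists_nat_gt hfin
      exact Set.mem_iUnion.2 ⟨M, hM.le⟩
    obtain ⟨M, hM⟩ : ∃ M, P (A M) ≠ 0 := by
      by_contra h
      push_neg at h
      have h1 : P (⋃ M, A M) = 0 := measure_iUnion_null h
      have h2 : P (⋃ M, A M) = 1 := by
        rw [← prob_compl_eq_zero_iff (MeasurableSet.iUnion hAmeas)]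
        rw [ae_iff] at hcover
        simpa [Set.compl_def] using hcover
      rw [h1] at h2
      exact zero_ne_one h2
    have hbound : ∀ n, ∀ ω ∈ A M, Real.exp (-(M:ℝ)) ≤ ∏ k ∈ Finset.range n, Y k ω := by
      intro n ω hω
      have hsle : ∑ k ∈ Finset.range n, X k ω ≤ (M:ℝ) := by
        have h1 : ENNReal.ofReal (∑ k ∈ Finset.range n, X k ω)
            = ∑ k ∈ Finset.range n, ENNReal.ofReal (X k ω) :=
          ENNReal.ofReal_sum_of_nonneg fun k _ => hX0 k ω
        have h2 : (∑ k ∈ Finset.range n, ENNReal.ofReal (X k ω)) ≤ G ω :=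
          ENNReal.sum_le_tsum _
        have h3 : ENNReal.ofReal (∑ k ∈ Finset.range n, X k ω) ≤ ENNReal.ofReal (M:ℝ) := by
          rw [h1, ENNReal.ofReal_natCast]
          exact le_trans h2 hω
        exact (ENNReal.ofReal_le_ofReal_iff (Nat.cast_nonneg M)).1 h3
      have hrw : ∏ k ∈ Finset.range n, Y k ω
          = Real.exp (-(∑ k ∈ Finset.range n, X k ω)) := by
        show ∏ k ∈ Finset.range n, Real.exp (-(X k ω)) = _
        rw [← Real.exp_sum, ← Finset.sum_neg_distrib]
      rw [hrw]
      exact Real.exp_le_exp.2 (neg_le_neg hsle)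
    have hlow : ∀ n, Real.exp (-(M:ℝ)) * (P (A M)).toReal
        ≤ ∫ ω, ∏ k ∈ Finset.range n, Y k ω ∂P := by
      intro n
      have hInd : ∫ ω, (A M).indicator (fun _ => Real.exp (-(M:ℝ))) ω ∂P
          = (P (A M)).toReal • Real.exp (-(M:ℝ)) := integral_indicator_const _ (hAmeas M)
      have hle : ∀ ω, (A M).indicator (fun _ => Real.exp (-(M:ℝ))) ω
          ≤ ∏ k ∈ Finset.range n, Y k ω := by
        intro ω
        by_cases hω : ω ∈ A M
        · rw [Set.indicator_of_mem hω]; exact hbound n ω hω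
        · rw [Set.indicator_of_notMem hω]
          exact Finset.prod_nonneg fun k _ => hY0 k ω
      have h := integral_mono ((integrable_const _).indicator (hAmeas M)) (hprodint n) hle
      rw [hInd, smul_eq_mul, mul_comm] at h
      exact h
    have hcpos' : 0 < Real.exp (-(M:ℝ)) * (P (A M)).toReal :=
      mul_pos (Real.exp_pos _) (ENNReal.toReal_pos hM (measure_ne_top P _))
    have := ge_of_tendsto hto0 (Filter.Eventually.of_forall hlow)
    linarith
  -- identify the common expectation and bound it below
  set μ : Measure ℝ := volume.withDensity (fun y => ENNReal.ofReal (ρ y)) with hμdef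
  have hμprob : IsProbabilityMeasure μ := by
    rw [← hlaw 0]
    exact Measure.isProbabilityMeasure_map (hmeas 0).aemeasurable
  have hμzero : μ {0} = 0 := by
    rw [hμdef, withDensity_apply _ (measurableSet_singleton 0),
      Measure.restrict_eq_zero.2 Real.volume_singleton, lintegral_zero_measure]
  set m : ℝ := ∫ y, min (|y| ^ p) 1 ∂μ with hmdef
  have hminmeas : Measurable fun y : ℝ => min (|y| ^ p) 1 :=
    (measurable_id.abs.pow measurable_const).min measurable_const
  have hminint : Integrable (fun y : ℝ => min (|y| ^ p) 1) μ := by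
    refine (integrable_const (1:ℝ)).mono' hminmeas.aestronglyMeasurable ?_
    filter_upwards with y
    rw [Real.norm_eq_abs, abs_of_nonneg (le_min (Real.rpow_nonneg (abs_nonneg _) p) zero_le_one)]
    exact min_le_right _ _
  have hmpos : 0 < m := by
    rw [hmdef]
    refine (integral_pos_iff_support_of_nonneg
      (fun y => le_min (Real.rpow_nonneg (abs_nonneg _) p) zero_le_one) hminint).2 ?_
    have hsub : ({0}ᶜ : Set ℝ) ⊆ Function.support fun y => min (|y| ^ p) 1 := by
      intro y hy
      have h1 : 0 < |y| := abs_pos.2 hy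
      exact ne_of_gt (lt_min (Real.rpow_pos_of_pos h1 p) one_pos)
    have h1 : μ ({0}ᶜ : Set ℝ) = 1 := by
      rw [measure_compl (measurableSet_singleton 0) (measure_ne_top μ _), hμzero, measure_univ,
        tsub_zero]
    calc (0:ENNReal) < 1 := zero_lt_one
      _ = μ ({0}ᶜ : Set ℝ) := h1.symm
      _ ≤ μ (Function.support fun y => min (|y| ^ p) 1) := measure_mono hsub
  have hEXeq : ∀ k, ∫ ω, X k ω ∂P = ∫ y, g k y ∂μ := by
    intro k
    rw [← hlaw k]
    exact (integral_map (hmeas k).aemeasurable (hgmeas k).aestronglyMeasurable).symm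
  have hgint : ∀ k, Integrable (g k) μ := by
    intro k
    refine (integrable_const (1:ℝ)).mono' (hgmeas k).aestronglyMeasurable ?_
    filter_upwards with y
    rw [Real.norm_eq_abs, abs_of_nonneg (hg0 k y)]
    exact hg1 k y
  have hglow : ∀ k y, min ((c k) ^ p) 1 * min (|y| ^ p) 1 ≤ g k y := by
    intro k y
    have habs : |γ k * y / α k| = c k * |y| := by
      rw [mul_div_right_comm, abs_mul, abs_of_pos (hcpos k)]
    have hrw : |γ k * y / α k| ^ p = (c k) ^ p * |y| ^ p := by
      rw [habs, Real.mul_rpow (hcpos k).le (abs_nonneg y)]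
    rw [hgdef]
    simp only
    rw [hrw]
    exact min_mul_min_le_aux (Real.rpow_nonneg (hcpos k).le p) (Real.rpow_nonneg (abs_nonneg y) p)
  have hEXlow : ∀ k, min ((c k) ^ p) 1 * m ≤ ∫ ω, X k ω ∂P := by
    intro k
    rw [hEXeq k, hmdef, ← integral_const_mul]
    exact integral_mono (hminint.const_mul _) (hgint k) (hglow k)
  -- summability of min (c^p) 1
  have hminsum : Summable fun k => min ((c k) ^ p) 1 := by
    refine (key.mul_right m⁻¹).of_nonneg_of_le
      (fun k => le_min (Real.rpow_nonneg (hcpos k).le p) zero_le_one) ?_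
    intro k
    rw [← div_eq_mul_inv, le_div_iff₀ hmpos]
    exact hEXlow k
  -- conclude
  have hNmin : ∀ᶠ k in atTop, min ((c k) ^ p) 1 = (c k) ^ p := by
    filter_upwards [hminsum.tendsto_atTop_zero.eventually (gt_mem_nhds one_pos)] with k hk
    rcases min_cases ((c k) ^ p) 1 with ⟨h1, _⟩ | ⟨h1, _⟩
    · exact h1
    · rw [h1] at hk; exact absurd hk (lt_irrefl 1)
  obtain ⟨N, hN⟩ := eventually_atTop.1 hNmin
  have hsum2 : Summable fun k => (c k) ^ p := by
    rw [← summable_nat_add_iff N]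
    refine ((summable_nat_add_iff N).2 hminsum).congr ?_
    intro k
    exact hN (k + N) (Nat.le_add_left N k)
  have htend : Tendsto c atTop (nhds 0) := by
    have h0 : Tendsto (fun k => (c k) ^ p) atTop (nhds 0) := hsum2.tendsto_atTop_zero
    have hcontat : ContinuousAt (fun t : ℝ => t ^ p⁻¹) 0 :=
      Real.continuousAt_rpow_const 0 p⁻¹ (Or.inr (by positivity))
    have h1 := hcontat.tendsto.comp h0
    rw [Real.zero_rpow (by positivity : p⁻¹ ≠ 0)] at h1
    refine h1.congr ?_
    intro k
    show ((c k) ^ p) ^ p⁻¹ = c k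
    rw [← Real.rpow_mul (hcpos k).le, mul_inv_cancel₀ (ne_of_gt hppos), Real.rpow_one]
  exact ⟨htend, hsum2⟩
end

section
/- Under the assumptions of the previous statement, suppose additionally there exist C > 0, x_0 > 0 and τ > 0 such that ∫_x^∞ ρ(y) dy ≥ C x^{-τ} for all x ≥ x_0. Then Σ_k (γ_k/α_k)^τ < ∞. -/
open MeasureTheory Filter

/-- Under the assumptions of the previous statement, if additionally the density `ρ`
satisfies the tail lower bound `∫_x^∞ ρ ≥ C x^{-τ}` for all `x ≥ x₀`, then
`∑ k (γ k / α k) ^ τ < ∞`. -/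
theorem stmt3 {Ω : Type*} [MeasurableSpace Ω] (P : Measure Ω) [IsProbabilityMeasure P]
    (u : ℕ → Ω → ℝ) (hmeas : ∀ k, Measurable (u k))
    (hindep : ProbabilityTheory.iIndepFun u P)
    (ρ : ℝ → ℝ) (hρmeas : Measurable ρ) (hρpos : ∀ y, 0 < ρ y)
    (hρeven : ∀ y, ρ (-y) = ρ y)
    (hlaw : ∀ k, P.map (u k) = volume.withDensity (fun y => ENNReal.ofReal (ρ y)))
    (γ α : ℕ → ℝ) (hγ : ∀ k, 0 < γ k) (hα : ∀ k, 0 < α k)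
    (p : ℝ) (hp : 1 ≤ p)
    (hsum : ∀ᵐ ω ∂P, Summable fun k => |γ k * u k ω / α k| ^ p)
    (C x₀ τ : ℝ) (hC : 0 < C) (hx₀ : 0 < x₀) (hτ : 0 < τ)
    (htail : ∀ x, x₀ ≤ x → C * x ^ (-τ) ≤ ∫ y in Set.Ioi x, ρ y) :
    Summable fun k => (γ k / α k) ^ τ := by
  classical
  set r : ℕ → ℝ := fun k => α k / γ k with hr
  have hrpos : ∀ k, 0 < r k := fun k => div_pos (hα k) (hγ k)
  set A : ℕ → Set ℝ := fun k => {y | r k < |y|} with hA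
  have hAmeas : ∀ k, MeasurableSet (A k) :=
    fun k => measurableSet_lt measurable_const measurable_id.abs
  set s : ℕ → Set Ω := fun k => u k ⁻¹' A k with hs
  have hsmeas : ∀ k, MeasurableSet (s k) := fun k => (hAmeas k).preimage (hmeas k)
  -- independence of the events
  have hindepS : ProbabilityTheory.iIndepSet s P := by
    rw [← ProbabilityTheory.iIndep_comap_mem_iff]
    have hg : ∀ k, Measurable fun y : ℝ => (y ∈ A k) :=
      fun k => measurableSet_setOf.mp (by simpa using hAmeas k)
    have h := (ProbabilityTheory.iIndepFun_iff_iIndep _ _ _).1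
      (hindep.comp (fun k (y : ℝ) => (y ∈ A k)) hg)
    exact h
  -- almost surely only finitely many events occur
  have hae : ∀ᵐ ω ∂P, ω ∉ limsup s atTop := by
    filter_upwards [hsum] with ω hω
    rw [mem_limsup_iff_frequently_mem]
    intro hfreq
    have h0 := hω.tendsto_atTop_zero
    have h1 : ∀ᶠ k in atTop, |γ k * u k ω / α k| ^ p < 1 :=
      h0.eventually (gt_mem_nhds one_pos)
    obtain ⟨k, hk, hklt⟩ := (hfreq.and_eventually h1).exists
    have hmem : r k < |u k ω| := hk
    have h2 : (1 : ℝ) < |γ k * u k ω / α k| := by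
      have : α k < γ k * |u k ω| := by
        rw [hr] at hmem
        calc α k = α k / γ k * γ k := (div_mul_cancel₀ _ (hγ k).ne').symm
          _ < |u k ω| * γ k := by
              exact mul_lt_mul_of_pos_right hmem (hγ k)
          _ = γ k * |u k ω| := mul_comm _ _
      rw [abs_div, abs_mul, abs_of_pos (hγ k), abs_of_pos (hα k)]
      rw [one_lt_div (hα k)]
      exact this
    have h3 : (1 : ℝ) ≤ |γ k * u k ω / α k| ^ p :=
      Real.one_le_rpow h2.le (le_trans zero_le_one hp)
    exact absurd hklt (not_lt.mpr h3)
  have hP0 : P (limsup s atTop) = 0 := by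
    have := ae_iff.1 hae
    simpa using this
  have hne : (∑' k, P (s k)) ≠ ⊤ := by
    intro h
    have := ProbabilityTheory.measure_limsup_eq_one hsmeas hindepS h
    rw [hP0] at this
    exact zero_ne_one this
  -- lower bound on the probabilities
  set m : ℕ → ℝ := fun k => max x₀ (r k) with hm
  have hmpos : ∀ k, 0 < m k := fun k => lt_of_lt_of_le hx₀ (le_max_left _ _)
  have hbound : ∀ k, ENNReal.ofReal (C * m k ^ (-τ)) ≤ P (s k) := by
    intro k
    have hPs : P (s k) = ∫⁻ y in A k, ENNReal.ofReal (ρ y) := by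
      rw [hs]
      rw [← Measure.map_apply (hmeas k) (hAmeas k), hlaw k,
        withDensity_apply _ (hAmeas k)]
    rw [hPs]
    have hsub : Set.Ioi (m k) ⊆ A k := by
      intro y hy
      have hy' : m k < y := hy
      have h1 : r k < y := lt_of_le_of_lt (le_max_right x₀ (r k)) hy'
      have h2 : 0 < y := lt_trans (hmpos k) hy'
      simpa [hA, abs_of_pos h2] using h1
    by_cases hint : IntegrableOn ρ (Set.Ioi (m k)) volume
    · calc ENNReal.ofReal (C * m k ^ (-τ))
          ≤ ENNReal.ofReal (∫ y in Set.Ioi (m k), ρ y) :=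
            ENNReal.ofReal_le_ofReal (htail (m k) (le_max_left _ _))
        _ = ∫⁻ y in Set.Ioi (m k), ENNReal.ofReal (ρ y) :=
            ofReal_integral_eq_lintegral_ofReal hint
              (Filter.Eventually.of_forall fun y => (hρpos y).le)
        _ ≤ ∫⁻ y in A k, ENNReal.ofReal (ρ y) := lintegral_mono_set hsub
    · exfalso
      have h0 : (∫ y in Set.Ioi (m k), ρ y) = 0 := integral_undef hint
      have := htail (m k) (le_max_left _ _)
      rw [h0] at this
      have hpos : 0 < C * m k ^ (-τ) :=
        mul_pos hC (Real.rpow_pos_of_pos (hmpos k) _)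
      exact absurd (lt_of_lt_of_le hpos this) (lt_irrefl _)
  have htsum : (∑' k, ENNReal.ofReal (C * m k ^ (-τ))) ≠ ⊤ :=
    ne_top_of_le_ne_top hne (ENNReal.tsum_le_tsum hbound)
  have hsummable : Summable fun k => C * m k ^ (-τ) := by
    have h := ENNReal.summable_toReal htsum
    refine h.congr fun k => ?_
    exact ENNReal.toReal_ofReal
      (mul_pos hC (Real.rpow_pos_of_pos (hmpos k) _)).le
  have hsum2 : Summable fun k => m k ^ (-τ) :=
    (summable_mul_left_iff hC.ne').1 hsummable
  -- eventually r k ≥ x₀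
  have h0 : Tendsto (fun k => m k ^ (-τ)) atTop (nhds 0) := hsum2.tendsto_atTop_zero
  have hev : ∀ᶠ k in atTop, x₀ ≤ r k := by
    filter_upwards [h0.eventually (gt_mem_nhds (Real.rpow_pos_of_pos hx₀ (-τ)))]
      with k hk
    by_contra h
    push_neg at h
    have hmk : m k = x₀ := max_eq_left h.le
    rw [hmk] at hk
    exact lt_irrefl _ hk
  have heq : ∀ᶠ k in atTop, m k ^ (-τ) = (γ k / α k) ^ τ := by
    filter_upwards [hev] with k hk
    have hmk : m k = r k := max_eq_right hk
    rw [hmk, hr, Real.rpow_neg (hrpos k).le,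
      ← Real.inv_rpow (hrpos k).le, inv_div]
  obtain ⟨N, hN⟩ := eventually_atTop.1 heq
  refine (summable_nat_add_iff N).1 ?_
  refine ((summable_nat_add_iff N).2 hsum2).congr fun n => ?_
  exact hN (n + N) (le_add_self)
end

section
/- Let s > 0 and let f, g : [-s,s] → [0,∞) both be even functions whose restrictions to [0,s] are monotonically decreasing. Then for every v ∈ ℝ, ∫_{-s}^{s} f(u+v) g(u) du ≤ ∫_{-s}^{s} f(u) g(u) du. -/
open MeasureTheory Set intervalIntegral

/-- A function `ℝ → ℝ` has the symmetric decay property if it is even and its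
restriction to `[0,∞)` is monotonically decreasing. -/
def SymDecay (f : ℝ → ℝ) : Prop :=
  (∀ x, f (-x) = f x) ∧ AntitoneOn f (Set.Ici 0)

namespace SymDecay

variable {f : ℝ → ℝ}

lemma abs_eq (hf : SymDecay f) (x : ℝ) : f |x| = f x := by
  rcases abs_choice x with h | h
  · rw [h]
  · rw [h, hf.1]

lemma mono (hf : SymDecay f) {x y : ℝ} (h : |y| ≤ |x|) : f x ≤ f y := by
  rw [← hf.abs_eq x, ← hf.abs_eq y]
  exact hf.2 (Set.mem_Ici.2 (abs_nonneg y)) (Set.mem_Ici.2 (abs_nonneg x)) h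

lemma measurable (hf : SymDecay f) : Measurable f := by
  have h1 : Antitone (fun x => f (max x 0)) := fun x y hxy =>
    hf.2 (Set.mem_Ici.2 (le_max_right x 0)) (Set.mem_Ici.2 (le_max_right y 0))
      (max_le_max hxy le_rfl)
  have h2 : f = (fun x => f (max x 0)) ∘ fun x : ℝ => |x| := by
    funext x
    simp only [Function.comp]
    rw [max_eq_left (abs_nonneg x), hf.abs_eq]
  rw [h2]
  exact h1.measurable.comp measurable_abs

lemma le_zero (hf : SymDecay f) (x : ℝ) : f x ≤ f 0 :=
  hf.mono (by simp)

end SymDecay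

lemma SymDecay.integrableOn_shift (hf : SymDecay f) (hf0 : ∀ x, 0 ≤ f x) (c : ℝ)
    {A : Set ℝ} (hAfin : MeasureTheory.volume A < ⊤) :
    MeasureTheory.IntegrableOn (fun u => f (u + c)) A := by
  apply MeasureTheory.Integrable.mono' (g := fun _ => f 0)
    ((MeasureTheory.integrableOn_const_iff).2 (Or.inr hAfin))
  · exact ((hf.measurable.comp (measurable_add_const c))).aestronglyMeasurable
  · filter_upwards with u
    rw [Real.norm_eq_abs, abs_of_nonneg (hf0 _)]
    exact hf.le_zero _

lemma SymDecay.intervalIntegrable_shift (hf : SymDecay f) (hf0 : ∀ x, 0 ≤ f x) (c a b : ℝ) :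
    IntervalIntegrable (fun u => f (u + c)) MeasureTheory.volume a b := by
  rw [intervalIntegrable_iff]
  exact hf.integrableOn_shift hf0 c (by rw [Set.uIoc, Real.volume_Ioc]; exact ENNReal.ofReal_lt_top)

lemma SymDecay.intervalIntegrable (hf : SymDecay f) (hf0 : ∀ x, 0 ≤ f x) (a b : ℝ) :
    IntervalIntegrable f MeasureTheory.volume a b := by
  simpa using hf.intervalIntegrable_shift hf0 0 a b

lemma key_nonneg {f : ℝ → ℝ} (hf : SymDecay f) (hf0 : ∀ x, 0 ≤ f x) {r : ℝ} (hr : 0 ≤ r)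
    {v : ℝ} (hv : 0 ≤ v) :
    ∫ u in (-r)..r, f (u + v) ≤ ∫ u in (-r)..r, f u := by
  rcases le_or_gt (2 * r) v with h2 | h2
  · apply intervalIntegral.integral_mono_on (by linarith)
      (hf.intervalIntegrable_shift hf0 v _ _) (hf.intervalIntegrable hf0 _ _)
    intro x hx
    apply hf.mono
    have hxr : |x| ≤ r := abs_le.2 ⟨hx.1, hx.2⟩
    have h3 := neg_abs_le x
    rw [abs_of_nonneg (by linarith : (0:ℝ) ≤ x + v)]
    linarith
  · have e1 : ∫ u in (-r)..r, f (u + v) = ∫ x in (-r + v)..(r + v), f x :=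
      intervalIntegral.integral_comp_add_right f v
    have e2 : (∫ x in (-r + v)..r, f x) + ∫ x in r..(r + v), f x
        = ∫ x in (-r + v)..(r + v), f x :=
      intervalIntegral.integral_add_adjacent_intervals
        (hf.intervalIntegrable hf0 _ _) (hf.intervalIntegrable hf0 _ _)
    have e3 : ∫ x in (-r)..(-r + v), f (x + 2 * r) = ∫ x in r..(r + v), f x := by
      rw [intervalIntegral.integral_comp_add_right]
      ring_nf
    have e4 : ∫ x in (-r)..(-r + v), f (x + 2 * r) ≤ ∫ x in (-r)..(-r + v), f x := by
      apply intervalIntegral.integral_mono_on (by linarith)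
        (hf.intervalIntegrable_shift hf0 (2 * r) _ _) (hf.intervalIntegrable hf0 _ _)
      intro x hx
      apply hf.mono
      have hx1 : -r ≤ x := hx.1
      have hx2 : x ≤ -r + v := hx.2
      have hxr : |x| ≤ r := abs_le.2 ⟨hx1, by linarith⟩
      rw [abs_of_nonneg (by linarith : (0:ℝ) ≤ x + 2 * r)]
      linarith
    have e5 : (∫ x in (-r)..(-r + v), f x) + ∫ x in (-r + v)..r, f x = ∫ x in (-r)..r, f x :=
      intervalIntegral.integral_add_adjacent_intervals
        (hf.intervalIntegrable hf0 _ _) (hf.intervalIntegrable hf0 _ _)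
    linarith

lemma key {f : ℝ → ℝ} (hf : SymDecay f) (hf0 : ∀ x, 0 ≤ f x) {r : ℝ} (hr : 0 ≤ r) (v : ℝ) :
    ∫ u in (-r)..r, f (u + v) ≤ ∫ u in (-r)..r, f u := by
  rcases le_or_gt 0 v with hv | hv
  · exact key_nonneg hf hf0 hr hv
  · have h1 : (fun u => f (u + v)) = fun u => (fun x => f (x + -v)) (-u) := by
      funext u
      rw [← hf.1 (u + v)]
      ring_nf
    have h2 : ∫ u in (-r)..r, f (u + v) = ∫ x in (-r)..r, f (x + -v) := by
      rw [h1, intervalIntegral.integral_comp_neg fun x => f (x + -v)]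
      norm_num
    rw [h2]
    exact key_nonneg hf hf0 hr (by linarith)

open MeasureTheory ENNReal in
lemma key_lint {f : ℝ → ℝ} (hf : SymDecay f) (hf0 : ∀ x, 0 ≤ f x) {r : ℝ} (hr : 0 ≤ r) (v : ℝ) :
    ∫⁻ u in Set.Ioo (-r) r, ENNReal.ofReal (f (u + v))
      ≤ ∫⁻ u in Set.Ioo (-r) r, ENNReal.ofReal (f u) := by
  rw [setLIntegral_congr (Ioo_ae_eq_Ioc (a := -r) (b := r)),
    setLIntegral_congr (Ioo_ae_eq_Ioc (a := -r) (b := r))]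
  have hfin : volume (Set.Ioc (-r) r) < ⊤ := by
    rw [Real.volume_Ioc]; exact ENNReal.ofReal_lt_top
  have h1 : ∫⁻ u in Set.Ioc (-r) r, ENNReal.ofReal (f (u + v))
      = ENNReal.ofReal (∫ u in Set.Ioc (-r) r, f (u + v)) :=
    (ofReal_integral_eq_lintegral_ofReal (hf.integrableOn_shift hf0 v hfin)
      (Filter.Eventually.of_forall fun u => hf0 _)).symm
  have h2 : ∫⁻ u in Set.Ioc (-r) r, ENNReal.ofReal (f u)
      = ENNReal.ofReal (∫ u in Set.Ioc (-r) r, f u) := by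
    have := (ofReal_integral_eq_lintegral_ofReal (hf.integrableOn_shift hf0 0 hfin)
      (Filter.Eventually.of_forall fun u => hf0 _)).symm
    simpa using this
  rw [h1, h2]
  apply ENNReal.ofReal_le_ofReal
  rw [← intervalIntegral.integral_of_le (by linarith : -r ≤ r),
    ← intervalIntegral.integral_of_le (by linarith : -r ≤ r)]
  exact key hf hf0 hr v

open MeasureTheory ENNReal in
lemma set_step {f g : ℝ → ℝ} (hf : SymDecay f) (hf0 : ∀ x, 0 ≤ f x)
    (hg : SymDecay g) {s : ℝ} (t : ℝ) (v : ℝ) :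
    ∫⁻ u in Set.Icc (-s) s ∩ {u | t < g u}, ENNReal.ofReal (f (u + v))
      ≤ ∫⁻ u in Set.Icc (-s) s ∩ {u | t < g u}, ENNReal.ofReal (f u) := by
  set A := Set.Icc (-s) s ∩ {u | t < g u} with hA
  rcases Set.eq_empty_or_nonempty A with hAe | hAne
  · rw [hAe]
    simp
  · obtain ⟨a, ha⟩ := hAne
    have has : -s ≤ a ∧ a ≤ s := ⟨ha.1.1, ha.1.2⟩
    have hs0 : 0 ≤ s := by linarith [has.1, has.2]
    have h0A : (0 : ℝ) ∈ A := by
      refine ⟨⟨by linarith, hs0⟩, ?_⟩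
      have : g a ≤ g 0 := hg.le_zero a
      exact lt_of_lt_of_le ha.2 this
    set B := A ∩ Set.Ici 0 with hB
    have hBne : B.Nonempty := ⟨0, h0A, Set.mem_Ici.2 le_rfl⟩
    have hBbdd : BddAbove B := ⟨s, fun x hx => hx.1.1.2⟩
    set r := sSup B with hrdef
    have hr0 : 0 ≤ r := le_csSup hBbdd ⟨h0A, Set.mem_Ici.2 le_rfl⟩
    have hsub1 : Set.Ioo (-r) r ⊆ A := by
      intro u hu
      have habs : |u| < r := abs_lt.2 ⟨hu.1, hu.2⟩
      obtain ⟨b, hbB, hb⟩ := exists_lt_of_lt_csSup hBne habs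
      have hb0 : (0:ℝ) ≤ b := hbB.2
      have hbs : b ≤ s := hbB.1.1.2
      have h1 := le_abs_self u
      have h2 := neg_abs_le u
      refine ⟨⟨by linarith, by linarith⟩, ?_⟩
      have hmono : g b ≤ g u := hg.mono (by rw [abs_of_nonneg hb0]; exact le_of_lt hb)
      exact lt_of_lt_of_le hbB.1.2 hmono
    have hsub2 : A ⊆ Set.Icc (-r) r := by
      intro u hu
      have h1 := le_abs_self u
      have h2 := neg_abs_le u
      have hus : |u| ≤ s := abs_le.2 ⟨hu.1.1, hu.1.2⟩
      have habsB : |u| ∈ B := by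
        refine ⟨⟨⟨by linarith, hus⟩, ?_⟩, Set.mem_Ici.2 (abs_nonneg u)⟩
        rw [Set.mem_setOf_eq, hg.abs_eq]
        exact hu.2
      have := le_csSup hBbdd habsB
      exact ⟨by linarith, by linarith⟩
    have hAae : A =ᵐ[volume] Set.Ioo (-r) r := by
      rw [MeasureTheory.ae_eq_set]
      constructor
      · apply measure_mono_null (t := ({-r, r} : Set ℝ))
        · intro u hu
          have h1 := hsub2 hu.1
          have h2 := hu.2
          simp only [Set.mem_Ioo, not_and_or, not_lt] at h2
          simp only [Set.mem_insert_iff, Set.mem_singleton_iff]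
          rcases h2 with h2 | h2
          · left; linarith [h1.1]
          · right; linarith [h1.2]
        · exact (Set.toFinite _).measure_zero volume
      · have : Set.Ioo (-r) r \ A = ∅ := Set.diff_eq_empty.2 hsub1
        rw [this]; simp
    rw [setLIntegral_congr hAae, setLIntegral_congr hAae]
    exact key_lint hf hf0 hr0 v

open MeasureTheory ENNReal in
/-- Correlation of a symmetric decaying function against a symmetric decaying
weight is maximized at shift zero. -/
theorem stmt8 (s : ℝ) (hs : 0 < s)
    (f g : ℝ → ℝ) (hf0 : ∀ x, 0 ≤ f x) (hg0 : ∀ x, 0 ≤ g x)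
    (hf : SymDecay f) (hg : SymDecay g) (v : ℝ) :
    ∫ u in (-s)..s, f (u + v) * g u ≤ ∫ u in (-s)..s, f u * g u := by
  have hmg : Measurable g := hg.measurable
  have hss : -s ≤ s := by linarith
  have hIccfin : volume (Set.Icc (-s) s) < ⊤ := by
    rw [Real.volume_Icc]; exact ENNReal.ofReal_lt_top
  have hIocfin : volume (Set.Ioc (-s) s) < ⊤ := by
    rw [Real.volume_Ioc]; exact ENNReal.ofReal_lt_top
  -- measurability of the super-level indicator on the product space
  have hMset : MeasurableSet {p : ℝ × ℝ | 0 < p.2 ∧ p.2 < g p.1} :=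
    (measurableSet_lt measurable_const measurable_snd).inter
      (measurableSet_lt measurable_snd (hmg.comp measurable_fst))
  -- the layer-cake chain
  have chain : ∀ w : ℝ, ∫⁻ u in Set.Icc (-s) s, ENNReal.ofReal (f (u + w) * g u)
      = ∫⁻ t in Set.Ioi (0:ℝ), ∫⁻ u in Set.Icc (-s) s,
          ENNReal.ofReal (f (u + w)) * (Set.Ioo 0 (g u)).indicator 1 t := by
    intro w
    have step1 : ∀ u : ℝ, ENNReal.ofReal (f (u + w) * g u)
        = ∫⁻ t in Set.Ioi (0:ℝ),
            ENNReal.ofReal (f (u + w)) * (Set.Ioo 0 (g u)).indicator 1 t := by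
      intro u
      rw [lintegral_const_mul' _ _ ENNReal.ofReal_ne_top,
        lintegral_indicator_one measurableSet_Ioo,
        Measure.restrict_apply measurableSet_Ioo,
        Set.inter_eq_left.2 Set.Ioo_subset_Ioi_self, Real.volume_Ioo, sub_zero,
        ENNReal.ofReal_mul (hf0 _)]
    rw [lintegral_congr step1]
    apply lintegral_lintegral_swap
    have heq : Function.uncurry (fun u t : ℝ =>
        ENNReal.ofReal (f (u + w)) * (Set.Ioo 0 (g u)).indicator 1 t)
        = fun p : ℝ × ℝ => ENNReal.ofReal (f (p.1 + w))
            * ({p : ℝ × ℝ | 0 < p.2 ∧ p.2 < g p.1}).indicator 1 p := by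
      funext p
      simp [Function.uncurry, Set.indicator_apply, Set.mem_Ioo]
    rw [heq]
    exact ((ENNReal.measurable_ofReal.comp
      ((hf.measurable.comp (measurable_add_const w)).comp measurable_fst)).mul
      (measurable_const.indicator hMset)).aemeasurable
  -- rewriting the inner integral as an integral over the super-level set
  have inner_eq : ∀ w : ℝ, ∀ t ∈ Set.Ioi (0:ℝ),
      (∫⁻ u in Set.Icc (-s) s,
          ENNReal.ofReal (f (u + w)) * (Set.Ioo 0 (g u)).indicator 1 t)
        = ∫⁻ u in Set.Icc (-s) s ∩ {u | t < g u}, ENNReal.ofReal (f (u + w)) := by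
    intro w t ht
    have hpt : ∀ u : ℝ, ENNReal.ofReal (f (u + w)) * (Set.Ioo 0 (g u)).indicator 1 t
        = ({u | t < g u}).indicator (fun u => ENNReal.ofReal (f (u + w))) u := by
      intro u
      simp only [Set.indicator_apply, Set.mem_Ioo, Set.mem_setOf_eq]
      have ht' : (0:ℝ) < t := ht
      by_cases h : t < g u
      · simp [h, ht']
      · simp [h]
    have hset : MeasurableSet {u : ℝ | t < g u} := measurableSet_lt measurable_const hmg
    rw [lintegral_congr hpt, lintegral_indicator hset,
      Measure.restrict_restrict hset, Set.inter_comm]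
  have prodInt : ∀ w : ℝ, IntegrableOn (fun u => f (u + w) * g u) (Set.Ioc (-s) s) := by
    intro w
    apply Integrable.mono' (g := fun _ => f 0 * g 0) ((integrableOn_const_iff).2 (Or.inr hIocfin))
    · exact ((hf.measurable.comp (measurable_add_const w)).mul hmg).aestronglyMeasurable
    · filter_upwards with u
      rw [Real.norm_eq_abs, abs_of_nonneg (mul_nonneg (hf0 _) (hg0 _))]
      exact mul_le_mul (hf.le_zero _) (hg.le_zero _) (hg0 _) (hf0 0)
  have main_lint : ∫⁻ u in Set.Icc (-s) s, ENNReal.ofReal (f (u + v) * g u)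
      ≤ ∫⁻ u in Set.Icc (-s) s, ENNReal.ofReal (f u * g u) := by
    have c0 := chain 0
    have i0 := inner_eq 0
    simp only [add_zero] at c0 i0
    rw [chain v, c0]
    apply lintegral_mono_ae
    filter_upwards [ae_restrict_mem measurableSet_Ioi] with t ht
    rw [inner_eq v t ht, i0 t ht]
    exact set_step hf hf0 hg t v
  rw [intervalIntegral.integral_of_le hss, intervalIntegral.integral_of_le hss]
  have hR0 : 0 ≤ ∫ u in Set.Ioc (-s) s, f u * g u :=
    setIntegral_nonneg measurableSet_Ioc fun u _ => mul_nonneg (hf0 u) (hg0 u)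
  rw [← ENNReal.ofReal_le_ofReal_iff hR0]
  have int2 : IntegrableOn (fun u => f u * g u) (Set.Ioc (-s) s) := by
    simpa using prodInt 0
  rw [ofReal_integral_eq_lintegral_ofReal (prodInt v)
      (Filter.Eventually.of_forall fun u => mul_nonneg (hf0 _) (hg0 _)),
    ofReal_integral_eq_lintegral_ofReal int2
      (Filter.Eventually.of_forall fun u => mul_nonneg (hf0 _) (hg0 _)),
    setLIntegral_congr (Ioc_ae_eq_Icc (a := -s) (b := s)),
    setLIntegral_congr (Ioc_ae_eq_Icc (a := -s) (b := s))]
  exact main_lint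
end

section
/- Let ρ : ℝ → (0,∞) be a C² probability density with ρ even, ρ|_{[0,∞)} decreasing, and ρ'' ∈ L¹(ℝ). Then there exists M > 1 such that for every s > 0, every Λ : ℝ → [0,∞) with the symmetric decay property, and every v with |v| ≤ 1: |∫_{-s}^{s} ρ''(u+v) Λ(u) du| ≤ M ∫_{-s}^{s} ρ(u) Λ(u) du. -/
open MeasureTheory

/-- For a `C²` symmetric positive probability density `ρ` with integrable second
derivative, there is `M > 1` bounding shifted second-derivative correlations
against density correlations, uniformly over symmetric decaying weights `Λ`,
radii `s > 0` and shifts `|v| ≤ 1`. -/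
theorem stmt9 (ρ : ℝ → ℝ) (hρpos : ∀ x, 0 < ρ x) (hρC2 : ContDiff ℝ 2 ρ)
    (hρeven : ∀ x, ρ (-x) = ρ x) (hρdec : AntitoneOn ρ (Set.Ici 0))
    (hρprob : ∫ x, ρ x = 1) (hρint : Integrable ρ)
    (hρ'' : Integrable (deriv (deriv ρ))) :
    ∃ M : ℝ, 1 < M ∧ ∀ s : ℝ, 0 < s → ∀ Λ : ℝ → ℝ, (∀ x, 0 ≤ Λ x) → SymDecay Λ →
      ∀ v : ℝ, |v| ≤ 1 →
        |∫ u in (-s)..s, deriv (deriv ρ) (u + v) * Λ u| ≤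
          M * ∫ u in (-s)..s, ρ u * Λ u := by
  classical
  set g := deriv (deriv ρ) with hg
  -- continuity of the second derivative
  have hgcont : Continuous g := by
    have h2 : ContDiff ℝ (1+1) ρ := by norm_num; exact hρC2
    have h1 : ContDiff ℝ 1 (deriv ρ) := (contDiff_succ_iff_deriv.mp h2).2.2
    exact (contDiff_one_iff_deriv.mp h1).2
  -- choose t with ∫_{-t}^{t} ρ ≥ 1/2
  obtain ⟨t, ht0, htint⟩ : ∃ t : ℝ, 0 < t ∧ (1:ℝ)/2 ≤ ∫ u in (-t)..t, ρ u := by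
    have h := intervalIntegral_tendsto_integral hρint Filter.tendsto_neg_atTop_atBot Filter.tendsto_id
    rw [hρprob] at h
    have := (h.eventually_const_le (by norm_num : (1:ℝ)/2 < 1)).and
      (Filter.eventually_gt_atTop 0)
    obtain ⟨t, h1, h2⟩ := this.exists
    exact ⟨t, h2, h1⟩
  -- bound on |g| on the compact set [-(t+2), t+2]
  obtain ⟨B, hB⟩ : ∃ B : ℝ, ∀ x ∈ Set.Icc (-(t+2)) (t+2), |g x| ≤ B := by
    obtain ⟨B, hB⟩ := (isCompact_Icc (a := -(t+2)) (b := t+2)).exists_bound_of_continuousOn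
      hgcont.continuousOn
    exact ⟨B, fun x hx => by simpa [Real.norm_eq_abs] using hB x hx⟩
  have hB0 : 0 ≤ B := le_trans (abs_nonneg _) (hB 0 ⟨by linarith, by linarith⟩)
  set δ := ρ (t+1) with hδdef
  have hδ : 0 < δ := hρpos _
  set K := ∫ x, |g x| with hK
  have hK0 : 0 ≤ K := integral_nonneg fun x => abs_nonneg _
  refine ⟨B/δ + 4*K + 2, by have h := div_nonneg hB0 hδ.le; linarith, ?_⟩
  intro s hs Λ hΛ0 hΛsym v hv
  obtain ⟨hΛeven, hΛdec⟩ := hΛsym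
  -- |ρ| even facts
  have hρabs : ∀ x : ℝ, ρ x = ρ |x| := by
    intro x
    rcases abs_cases x with ⟨h, _⟩ | ⟨h, _⟩
    · rw [h]
    · rw [h, ← hρeven x]
  have hΛabs : ∀ x : ℝ, Λ x = Λ |x| := by
    intro x
    rcases abs_cases x with ⟨h, _⟩ | ⟨h, _⟩
    · rw [h]
    · rw [h, ← hΛeven x]
  -- measurability of Λ
  have hΛmeas : Measurable Λ := by
    have hanti : Antitone (fun x : ℝ => Λ (max x 0)) := by
      intro x y hxy
      exact hΛdec (le_max_right x 0) (le_max_right y 0) (max_le_max hxy le_rfl)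
    have : Λ = fun x : ℝ => (fun z : ℝ => Λ (max z 0)) |x| := by
      funext x
      simp only []
      rw [max_eq_left (abs_nonneg x), ← hΛabs]
    rw [this]
    exact hanti.measurable.comp measurable_abs
  have hΛtop : ∀ x, Λ x ≤ Λ 0 := by
    intro x
    rw [hΛabs x]
    exact hΛdec Set.self_mem_Ici (abs_nonneg x) (abs_nonneg x)
  have hΛbdd : ∃ C, ∀ x, ‖Λ x‖ ≤ C :=
    ⟨Λ 0, fun x => by rw [Real.norm_eq_abs, abs_of_nonneg (hΛ0 x)]; exact hΛtop x⟩
  have hΛaem : AEStronglyMeasurable Λ (volume : Measure ℝ) :=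
    hΛmeas.aestronglyMeasurable
  -- integrability facts
  have hgv : Integrable (fun u : ℝ => g (u + v)) := hρ''.comp_add_right v
  have hgvabs : Integrable (fun u : ℝ => |g (u + v)|) := hgv.abs
  have hIρΛ : Integrable (fun u : ℝ => ρ u * Λ u) := by
    have := hρint.bdd_mul hΛaem (Filter.Eventually.of_forall hΛbdd.choose_spec)
    exact this.congr (Filter.Eventually.of_forall fun x => mul_comm _ _)
  have hIgΛ : Integrable (fun u : ℝ => g (u + v) * Λ u) := by
    have := hgv.bdd_mul hΛaem (Filter.Eventually.of_forall hΛbdd.choose_spec)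
    exact this.congr (Filter.Eventually.of_forall fun x => mul_comm _ _)
  have hIgaΛ : Integrable (fun u : ℝ => |g (u + v)| * Λ u) := by
    have := hgvabs.bdd_mul hΛaem (Filter.Eventually.of_forall hΛbdd.choose_spec)
    exact this.congr (Filter.Eventually.of_forall fun x => mul_comm _ _)
  -- pieces
  set a := min s (t+1) with ha
  have ha0 : 0 < a := lt_min hs (by linarith)
  have has : a ≤ s := min_le_left _ _
  have hat : a ≤ t + 1 := min_le_right _ _
  set R := ∫ u in (-s)..s, ρ u * Λ u with hR
  have hR0 : 0 ≤ R :=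
    intervalIntegral.integral_nonneg (by linarith)
      (fun u _ => mul_nonneg (hρpos u).le (hΛ0 u))
  -- ∫_{-c}^{c} ρΛ ≤ R for 0 < c ≤ s
  have hsubR : ∀ c : ℝ, 0 < c → c ≤ s → (∫ u in (-c)..c, ρ u * Λ u) ≤ R := by
    intro c hc hcs
    exact intervalIntegral.integral_mono_interval (by linarith) (by linarith) hcs
      (Filter.Eventually.of_forall fun u => mul_nonneg (hρpos u).le (hΛ0 u))
      hIρΛ.intervalIntegrable
  -- tail bound for |g(·+v)| integrals : ∫_p^q |g(u+v)| ≤ K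
  have hKbound : ∀ p q : ℝ, p ≤ q → (∫ u in p..q, |g (u + v)|) ≤ K := by
    intro p q hpq
    rw [intervalIntegral.integral_of_le hpq]
    calc ∫ u in Set.Ioc p q, |g (u + v)| ≤ ∫ u, |g (u + v)| :=
          setIntegral_le_integral hgvabs (Filter.Eventually.of_forall fun u => abs_nonneg _)
      _ = K := by rw [hK]; exact integral_add_right_eq_self (fun x => |g x|) v
  -- middle pointwise bound: for |u| ≤ t+1, |g(u+v)| Λ u ≤ (B/δ) ρ u Λ u
  have hptwise : ∀ u : ℝ, |u| ≤ t + 1 → |g (u + v)| * Λ u ≤ B/δ * (ρ u * Λ u) := by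
    intro u hu
    have h1 : |g (u + v)| ≤ B := by
      have huv : |u + v| ≤ t + 2 := (abs_add_le u v).trans (by linarith [abs_le.mp hv])
      exact hB _ (Set.mem_Icc.mpr (abs_le.mp huv))
    have h2 : δ ≤ ρ u := by
      rw [hρabs u]
      exact hρdec (abs_nonneg u) (by linarith : (0:ℝ) ≤ t + 1) hu
    have h3 : |g (u + v)| ≤ B/δ * ρ u := by
      rw [div_mul_eq_mul_div, le_div_iff₀ hδ]
      calc |g (u + v)| * δ ≤ B * δ := mul_le_mul_of_nonneg_right h1 hδ.le
        _ ≤ B * ρ u := mul_le_mul_of_nonneg_left h2 hB0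
    calc |g (u + v)| * Λ u ≤ (B/δ * ρ u) * Λ u := mul_le_mul_of_nonneg_right h3 (hΛ0 u)
      _ = B/δ * (ρ u * Λ u) := by ring
  -- middle integral bound
  have hmid : (∫ u in (-a)..a, |g (u + v)| * Λ u) ≤ B/δ * R := by
    calc (∫ u in (-a)..a, |g (u + v)| * Λ u)
        ≤ ∫ u in (-a)..a, B/δ * (ρ u * Λ u) := by
          apply intervalIntegral.integral_mono_on (by linarith)
            hIgaΛ.intervalIntegrable (hIρΛ.intervalIntegrable.const_mul _)
          intro u hu
          apply hptwise
          rw [abs_le]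
          exact ⟨by linarith [hu.1], by linarith [hu.2]⟩
      _ = B/δ * ∫ u in (-a)..a, ρ u * Λ u := intervalIntegral.integral_const_mul _ _
      _ ≤ B/δ * R := mul_le_mul_of_nonneg_left (hsubR a ha0 has) (by positivity)
  -- Λ a ≤ 2 R when t + 1 ≤ s (so that a = t+1 ≥ t)
  have hΛa2R : t + 1 ≤ s → Λ a ≤ 2 * R := by
    intro hts
    have haeq : a = t + 1 := min_eq_right hts
    have h1 : Λ a * (1/2 : ℝ) ≤ Λ a * ∫ u in (-a)..a, ρ u := by
      apply mul_le_mul_of_nonneg_left _ (hΛ0 a)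
      calc (1:ℝ)/2 ≤ ∫ u in (-t)..t, ρ u := htint
        _ ≤ ∫ u in (-a)..a, ρ u := by
            apply intervalIntegral.integral_mono_interval (by linarith [haeq])
              (by linarith) (by linarith [haeq])
              (Filter.Eventually.of_forall fun u => (hρpos u).le)
              hρint.intervalIntegrable
    have h2 : Λ a * ∫ u in (-a)..a, ρ u ≤ ∫ u in (-a)..a, ρ u * Λ u := by
      rw [← intervalIntegral.integral_const_mul]
      apply intervalIntegral.integral_mono_on (by linarith)
        (hρint.intervalIntegrable.const_mul _) hIρΛ.intervalIntegrable
      intro u hu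
      have hua : |u| ≤ a := abs_le.mpr ⟨hu.1, hu.2⟩
      have hΛua : Λ a ≤ Λ u := by
        rw [hΛabs u]
        exact hΛdec (abs_nonneg u) ha0.le hua
      calc Λ a * ρ u ≤ Λ u * ρ u := mul_le_mul_of_nonneg_right hΛua (hρpos u).le
        _ = ρ u * Λ u := mul_comm _ _
    have := (h1.trans h2).trans (hsubR a ha0 has)
    linarith
  -- tail bounds
  have htail_right : (∫ u in a..s, |g (u + v)| * Λ u) ≤ 2 * K * R := by
    rcases le_or_gt s (t+1) with hcase | hcase
    · have : a = s := min_eq_left hcase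
      rw [this, intervalIntegral.integral_same]
      positivity
    · have hts : t + 1 ≤ s := hcase.le
      calc (∫ u in a..s, |g (u + v)| * Λ u)
          ≤ ∫ u in a..s, |g (u + v)| * Λ a := by
            apply intervalIntegral.integral_mono_on has
              hIgaΛ.intervalIntegrable (hgvabs.intervalIntegrable.mul_const _)
            intro u hu
            apply mul_le_mul_of_nonneg_left _ (abs_nonneg _)
            exact hΛdec ha0.le (ha0.le.trans hu.1) hu.1
        _ = (∫ u in a..s, |g (u + v)|) * Λ a := intervalIntegral.integral_mul_const _ _
        _ ≤ K * Λ a := mul_le_mul_of_nonneg_right (hKbound a s has) (hΛ0 a)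
        _ ≤ K * (2 * R) := mul_le_mul_of_nonneg_left (hΛa2R hts) hK0
        _ = 2 * K * R := by ring
  have htail_left : (∫ u in (-s)..(-a), |g (u + v)| * Λ u) ≤ 2 * K * R := by
    rcases le_or_gt s (t+1) with hcase | hcase
    · have : a = s := min_eq_left hcase
      rw [this, intervalIntegral.integral_same]
      positivity
    · have hts : t + 1 ≤ s := hcase.le
      calc (∫ u in (-s)..(-a), |g (u + v)| * Λ u)
          ≤ ∫ u in (-s)..(-a), |g (u + v)| * Λ a := by
            apply intervalIntegral.integral_mono_on (by linarith)
              hIgaΛ.intervalIntegrable (hgvabs.intervalIntegrable.mul_const _)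
            intro u hu
            apply mul_le_mul_of_nonneg_left _ (abs_nonneg _)
            rw [hΛabs u]
            have : a ≤ |u| := by
              rw [abs_of_nonpos (by linarith [hu.2] : u ≤ 0)]
              linarith [hu.2]
            exact hΛdec ha0.le (le_trans ha0.le this) this
        _ = (∫ u in (-s)..(-a), |g (u + v)|) * Λ a := intervalIntegral.integral_mul_const _ _
        _ ≤ K * Λ a := mul_le_mul_of_nonneg_right (hKbound (-s) (-a) (by linarith)) (hΛ0 a)
        _ ≤ K * (2 * R) := mul_le_mul_of_nonneg_left (hΛa2R hts) hK0
        _ = 2 * K * R := by ring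
  -- assemble
  have hsplit : (∫ u in (-s)..s, |g (u + v)| * Λ u)
      = (∫ u in (-s)..(-a), |g (u + v)| * Λ u) + (∫ u in (-a)..a, |g (u + v)| * Λ u)
        + (∫ u in a..s, |g (u + v)| * Λ u) := by
    rw [intervalIntegral.integral_add_adjacent_intervals
        (hIgaΛ.intervalIntegrable) (hIgaΛ.intervalIntegrable),
      intervalIntegral.integral_add_adjacent_intervals
        (hIgaΛ.intervalIntegrable) (hIgaΛ.intervalIntegrable)]
  calc |∫ u in (-s)..s, g (u + v) * Λ u|
      ≤ ∫ u in (-s)..s, |g (u + v) * Λ u| :=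
        intervalIntegral.abs_integral_le_integral_abs (by linarith)
    _ = ∫ u in (-s)..s, |g (u + v)| * Λ u := by
        apply intervalIntegral.integral_congr
        intro u _
        simp only [abs_mul, abs_of_nonneg (hΛ0 u)]
    _ = (∫ u in (-s)..(-a), |g (u + v)| * Λ u) + (∫ u in (-a)..a, |g (u + v)| * Λ u)
        + (∫ u in a..s, |g (u + v)| * Λ u) := hsplit
    _ ≤ 2 * K * R + B/δ * R + 2 * K * R :=
        add_le_add (add_le_add htail_left hmid) htail_right
    _ ≤ (B/δ + 4*K + 2) * R := by nlinarith [hR0]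
end

section
/- Under the same assumptions on ρ as above (C² symmetric positive density with integrable second derivative), with the constant M from the previous statement: for every s > 0, every Λ with the symmetric decay property, and every |v| ≤ 1, there exists ζ ∈ [-M/2, M/2] such that ∫_{-s}^{s} ρ(u+v) Λ(u) du = (1 + ζ v²) ∫_{-s}^{s} ρ(u) Λ(u) du. -/
open MeasureTheory intervalIntegral

lemma aux_deriv (f f' Λ : ℝ → ℝ) (hf' : ∀ x, HasDerivAt f (f' x) x)
    (hfc : Continuous f) (hf'c : Continuous f')
    (hΛm : Measurable Λ) (hΛ : ∀ x, 0 ≤ Λ x) (hΛ0 : ∀ x, Λ x ≤ Λ 0)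
    (s : ℝ) (t₀ : ℝ) :
    HasDerivAt (fun t => ∫ u in (-s)..s, f (u + t) * Λ u)
      (∫ u in (-s)..s, f' (u + t₀) * Λ u) t₀ := by
  obtain ⟨C, hC⟩ : ∃ C, ∀ y ∈ Set.Icc (-(|s| + |t₀| + 1)) (|s| + |t₀| + 1), ‖f' y‖ ≤ C :=
    isCompact_Icc.exists_bound_of_continuousOn hf'c.continuousOn
  have hC0 : 0 ≤ C := le_trans (norm_nonneg _) (hC 0 (by constructor <;> [nlinarith [abs_nonneg s, abs_nonneg t₀]; nlinarith [abs_nonneg s, abs_nonneg t₀]]))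
  have hmem : ∀ u ∈ Set.uIoc (-s) s, ∀ x ∈ Metric.ball t₀ 1,
      u + x ∈ Set.Icc (-(|s| + |t₀| + 1)) (|s| + |t₀| + 1) := by
    intro u hu x hx
    have h1 : |u| ≤ |s| := by
      rcases hu with ⟨h1, h2⟩
      have ha : -|s| ≤ -s ⊓ s := le_min (neg_le_neg (le_abs_self s)) (neg_abs_le s)
      have hb : -s ⊔ s ≤ |s| := max_le (neg_le_abs s) (le_abs_self s)
      rw [abs_le]
      exact ⟨le_of_lt (lt_of_le_of_lt ha h1), le_trans h2 hb⟩
    have h2 : |x - t₀| < 1 := by simpa [Real.dist_eq] using hx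
    have := abs_add_le u x
    have := abs_add_le (x - t₀) t₀
    have hxx : |x| ≤ |x - t₀| + |t₀| := by simpa using abs_add_le (x - t₀) t₀
    rw [Set.mem_Icc]
    have hux : |u + x| ≤ |s| + |t₀| + 1 := by
      calc |u + x| ≤ |u| + |x| := abs_add_le u x
        _ ≤ |s| + (|x - t₀| + |t₀|) := by linarith
        _ ≤ |s| + |t₀| + 1 := by linarith
    rw [abs_le] at hux; exact ⟨hux.1, hux.2⟩
  have key := intervalIntegral.hasDerivAt_integral_of_dominated_loc_of_deriv_le
    (F := fun x u => f (u + x) * Λ u) (F' := fun x u => f' (u + x) * Λ u)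
    (a := -s) (b := s) (μ := volume) (x₀ := t₀) (bound := fun _ => C * Λ 0)
    (s := Metric.ball t₀ 1) (Metric.ball_mem_nhds t₀ one_pos)
    (Filter.Eventually.of_forall fun x =>
      ((hfc.comp (continuous_id.add continuous_const)).measurable.mul hΛm).aestronglyMeasurable)
    ?_ ?_ ?_ ?_ ?_
  · exact key.2
  · -- IntervalIntegrable (F t₀)
    apply IntervalIntegrable.mono_fun' (g := fun u => |f (u + t₀)| * Λ 0)
    · exact (((hfc.comp (continuous_id.add continuous_const)).abs).mul continuous_const).intervalIntegrable _ _
    · exact ((hfc.comp (continuous_id.add continuous_const)).measurable.mul hΛm).aestronglyMeasurable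
    · filter_upwards with u
      have : ‖f (u + t₀) * Λ u‖ = |f (u + t₀)| * Λ u := by
        rw [Real.norm_eq_abs, abs_mul, abs_of_nonneg (hΛ u)]
      rw [this]
      exact mul_le_mul_of_nonneg_left (hΛ0 u) (abs_nonneg _)
  · exact ((hf'c.comp (continuous_id.add continuous_const)).measurable.mul hΛm).aestronglyMeasurable
  · filter_upwards with u hu x hx
    have hm := hmem u hu x hx
    have : ‖f' (u + x) * Λ u‖ = |f' (u + x)| * Λ u := by
      rw [Real.norm_eq_abs, abs_mul, abs_of_nonneg (hΛ u)]
    rw [this]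
    exact mul_le_mul (hC _ hm) (hΛ0 u) (hΛ u) hC0
  · exact intervalIntegrable_const
  · filter_upwards with u _ x _
    have h1 : HasDerivAt (fun x => u + x) 1 x := by
      simpa using (hasDerivAt_id x).const_add u
    have h2 : HasDerivAt (fun x => f (u + x)) (f' (u + x)) x := by
      have h3 := (hf' (u + x)).comp x h1
      rw [mul_one] at h3
      exact h3
    exact h2.mul_const (Λ u)


/-- Given a constant `M > 1` as in the second-derivative bound, for every `s > 0`,
symmetric decaying `Λ` and `|v| ≤ 1` there is `ζ ∈ [-M/2, M/2]` with
`∫_{-s}^s ρ(u+v) Λ(u) du = (1 + ζ v²) ∫_{-s}^s ρ(u) Λ(u) du`. -/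
theorem stmt10 (ρ : ℝ → ℝ) (hρpos : ∀ x, 0 < ρ x) (hρC2 : ContDiff ℝ 2 ρ)
    (hρeven : ∀ x, ρ (-x) = ρ x) (hρdec : AntitoneOn ρ (Set.Ici 0))
    (hρprob : ∫ x, ρ x = 1) (hρint : Integrable ρ)
    (hρ'' : Integrable (deriv (deriv ρ)))
    (M : ℝ) (hM : 1 < M)
    (hMbound : ∀ s : ℝ, 0 < s → ∀ Λ : ℝ → ℝ, (∀ x, 0 ≤ Λ x) → SymDecay Λ →
      ∀ v : ℝ, |v| ≤ 1 →
        |∫ u in (-s)..s, deriv (deriv ρ) (u + v) * Λ u| ≤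
          M * ∫ u in (-s)..s, ρ u * Λ u) :
    ∀ s : ℝ, 0 < s → ∀ Λ : ℝ → ℝ, (∀ x, 0 ≤ Λ x) → SymDecay Λ →
      ∀ v : ℝ, |v| ≤ 1 →
        ∃ ζ ∈ Set.Icc (-(M / 2)) (M / 2),
          ∫ u in (-s)..s, ρ (u + v) * Λ u =
            (1 + ζ * v ^ 2) * ∫ u in (-s)..s, ρ u * Λ u := by
  intro s hs Λ hΛ hΛsym v hv
  obtain ⟨hΛeven, hΛdec⟩ := hΛsym
  -- Λ facts
  have hΛabs : ∀ x, Λ x = Λ |x| := by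
    intro x
    rcases abs_cases x with ⟨h, _⟩ | ⟨h, _⟩
    · rw [h]
    · rw [h, hΛeven]
  have hΛ0 : ∀ x, Λ x ≤ Λ 0 := fun x => by
    rw [hΛabs x]
    exact hΛdec (Set.mem_Ici.2 le_rfl) (Set.mem_Ici.2 (abs_nonneg x)) (abs_nonneg x)
  have hΛm : Measurable Λ := by
    have hg : Antitone fun t => Λ (max t 0) := fun a b hab =>
      hΛdec (Set.mem_Ici.2 (le_max_right a 0)) (Set.mem_Ici.2 (le_max_right b 0))
        (max_le_max hab le_rfl)
    have hΛeq : Λ = (fun t => Λ (max t 0)) ∘ fun x => |x| := by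
      funext x
      simp only [Function.comp_apply, max_eq_left (abs_nonneg x)]
      exact hΛabs x
    rw [hΛeq]
    exact hg.measurable.comp measurable_abs
  -- ρ facts
  have hρd1 : ∀ x, HasDerivAt ρ (deriv ρ x) x := fun x =>
    ((hρC2.differentiable two_ne_zero) x).hasDerivAt
  have hρ'C1 : ContDiff ℝ 1 (deriv ρ) := by
    have h := hρC2
    have h2 : (2 : WithTop ℕ∞) = 1 + 1 := by norm_num
    rw [h2, contDiff_succ_iff_deriv] at h
    exact h.2.2
  have hρ'd : ∀ x, HasDerivAt (deriv ρ) (deriv (deriv ρ) x) x := fun x =>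
    ((hρ'C1.differentiable one_ne_zero) x).hasDerivAt
  have hρc : Continuous ρ := hρC2.continuous
  have hρ'c : Continuous (deriv ρ) := hρ'C1.continuous
  have hρ''c : Continuous (deriv (deriv ρ)) := hρ'C1.continuous_deriv le_rfl
  set G : ℝ → ℝ := fun t => ∫ u in (-s)..s, ρ (u + t) * Λ u with hG
  set G1 : ℝ → ℝ := fun t => ∫ u in (-s)..s, deriv ρ (u + t) * Λ u with hG1
  have hdG : ∀ t, HasDerivAt G (G1 t) t := fun t =>
    aux_deriv ρ (deriv ρ) Λ hρd1 hρc hρ'c hΛm hΛ hΛ0 s t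
  have hdG1 : ∀ t, HasDerivAt G1 (∫ u in (-s)..s, deriv (deriv ρ) (u + t) * Λ u) t := fun t =>
    aux_deriv (deriv ρ) (deriv (deriv ρ)) Λ hρ'd hρ'c hρ''c hΛm hΛ hΛ0 s t
  set I0 := ∫ u in (-s)..s, ρ u * Λ u with hI0def
  have hG00 : G 0 = I0 := by simp [hG, hI0def]
  have hI0 : 0 ≤ I0 := intervalIntegral.integral_nonneg (by linarith)
    (fun u _ => mul_nonneg (hρpos u).le (hΛ u))
  -- G1 0 = 0
  have hρ'odd : ∀ x, deriv ρ (-x) = -deriv ρ x := by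
    intro x
    have h1 : deriv (fun y => ρ (-y)) x = deriv ρ x := by
      congr 1
      funext y
      rw [hρeven]
    rw [deriv_comp_neg] at h1
    linarith
  have hG1zero : G1 0 = 0 := by
    have hcomp := intervalIntegral.integral_comp_neg (a := -s) (b := s)
      (f := fun u => deriv ρ u * Λ u)
    rw [neg_neg] at hcomp
    have heq : (∫ x in (-s)..s, deriv ρ (-x) * Λ (-x)) =
        ∫ x in (-s)..s, -(deriv ρ x * Λ x) := by
      congr 1
      funext x
      rw [hρ'odd, hΛeven]
      ring
    rw [heq, intervalIntegral.integral_neg] at hcomp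
    have : G1 0 = ∫ u in (-s)..s, deriv ρ u * Λ u := by simp [hG1]
    rw [this]
    linarith
  -- second derivative bound
  have hG2 : ∀ t, |t| ≤ 1 → |∫ u in (-s)..s, deriv (deriv ρ) (u + t) * Λ u| ≤ M * I0 :=
    fun t ht => hMbound s hs Λ hΛ ⟨hΛeven, hΛdec⟩ t ht
  -- |G1 t| ≤ M * I0 * |t| on uIcc 0 v
  have hG1bound : ∀ t ∈ Set.uIcc 0 v, |G1 t| ≤ M * I0 * |t| := by
    intro t ht
    have hsub : Set.uIcc 0 v ⊆ Set.Icc (-1 : ℝ) 1 := by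
      intro x hx
      rw [abs_le] at hv
      rcases Set.mem_uIcc.mp hx with ⟨h1, h2⟩ | ⟨h1, h2⟩ <;>
        exact ⟨by linarith, by linarith⟩
    have hmvt := Convex.norm_image_sub_le_of_norm_hasDerivWithin_le
      (f := G1) (f' := fun t => ∫ u in (-s)..s, deriv (deriv ρ) (u + t) * Λ u)
      (s := Set.Icc (-1 : ℝ) 1) (C := M * I0)
      (fun x hx => (hdG1 x).hasDerivWithinAt)
      (fun x hx => hG2 x (abs_le.2 ⟨hx.1, hx.2⟩))
      (convex_Icc _ _) (hsub (Set.left_mem_uIcc)) (hsub ht)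
    simpa [hG1zero] using hmvt
  -- FTC
  have hG1cont : Continuous G1 := by
    have : Differentiable ℝ G1 := fun t => (hdG1 t).differentiableAt
    exact this.continuous
  have hFTC : ∫ t in (0 : ℝ)..v, G1 t = G v - G 0 :=
    intervalIntegral.integral_eq_sub_of_hasDerivAt (fun t _ => hdG t)
      (hG1cont.intervalIntegrable _ _)
  -- key estimate
  have habs : |G v - G 0| ≤ M * I0 / 2 * v ^ 2 := by
    rw [← hFTC]
    have hb : ‖∫ t in (0 : ℝ)..v, G1 t‖ ≤ |(∫ t in (0 : ℝ)..v, M * I0 * abs t)| := by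
      apply intervalIntegral.norm_integral_le_abs_of_norm_le
      · filter_upwards [ae_restrict_mem measurableSet_uIoc] with t ht
        exact hG1bound t (Set.uIoc_subset_uIcc ht)
      · exact ((continuous_const.mul continuous_abs)).intervalIntegrable _ _
    have hcalc : |(∫ t in (0 : ℝ)..v, M * I0 * abs t)| = M * I0 / 2 * v ^ 2 := by
      rw [intervalIntegral.integral_const_mul]
      have habsint : (∫ t in (0 : ℝ)..v, |t|) = v * |v| / 2 := by
        rcases le_or_gt 0 v with h | h
        · rw [intervalIntegral.integral_congr (g := fun t => t)
            (fun t ht => abs_of_nonneg (by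
              rcases Set.mem_uIcc.mp ht with ⟨h1, _⟩ | ⟨h1, _⟩ <;> linarith)),
            integral_id, abs_of_nonneg h]
          ring
        · rw [intervalIntegral.integral_congr (g := fun t => -t)
            (fun t ht => abs_of_nonpos (by
              rcases Set.mem_uIcc.mp ht with ⟨_, h2⟩ | ⟨_, h2⟩ <;> linarith)),
            intervalIntegral.integral_neg, integral_id, abs_of_neg h]
          ring
      rw [habsint, abs_mul, abs_of_nonneg (mul_nonneg (by linarith : (0:ℝ) ≤ M) hI0)]
      have hva : |v * |v| / 2| = v ^ 2 / 2 := by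
        rw [abs_div, abs_mul, abs_abs, ← sq_abs]
        simp [sq]
      rw [hva]
      ring
    calc ‖∫ t in (0 : ℝ)..v, G1 t‖ ≤ |(∫ t in (0 : ℝ)..v, M * I0 * abs t)| := hb
      _ = M * I0 / 2 * v ^ 2 := hcalc
  rw [hG00] at habs
  -- assemble
  have hGv : G v = ∫ u in (-s)..s, ρ (u + v) * Λ u := rfl
  rcases eq_or_ne v 0 with hv0 | hv0
  · refine ⟨0, ⟨by linarith, by linarith⟩, ?_⟩
    rw [← hGv, hv0]
    simpa using hG00
  rcases hI0.eq_or_lt with hI00 | hI0pos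
  · refine ⟨0, ⟨by linarith, by linarith⟩, ?_⟩
    rw [← hGv]
    have h1 : |G v - I0| ≤ 0 := by
      calc |G v - I0| ≤ M * I0 / 2 * v ^ 2 := habs
        _ = 0 := by rw [← hI00]; ring
    have h2 : G v = I0 := by
      have h3 : G v - I0 = 0 := abs_eq_zero.mp (le_antisymm h1 (abs_nonneg _))
      linarith
    rw [h2, ← hI00]
    ring
  · have hv2 : (0 : ℝ) < v ^ 2 := by positivity
    refine ⟨(G v - I0) / (v ^ 2 * I0), ?_, ?_⟩
    · have hζ : |(G v - I0) / (v ^ 2 * I0)| ≤ M / 2 := by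
        rw [abs_div, div_le_iff₀ (by positivity)]
        have h1 : |v ^ 2 * I0| = v ^ 2 * I0 := abs_of_pos (by positivity)
        rw [h1]
        calc |G v - I0| ≤ M * I0 / 2 * v ^ 2 := habs
          _ = M / 2 * (v ^ 2 * I0) := by ring
      exact ⟨(abs_le.mp hζ).1, (abs_le.mp hζ).2⟩
    · rw [← hGv]
      field_simp
      ring
end

section
/- For 1 < p ≤ 2 and all real x, y: |x+y|^p + |x-y|^p ≥ 2^{p-1}(|x|^p + |y|^p). -/
open NNReal

lemma nn_concave (s t : ℝ≥0) {q : ℝ} (hq : 0 < q) (hq1 : q ≤ 1) :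
    s ^ q + t ^ q ≤ 2 ^ (1 - q) * (s + t) ^ q := by
  have h1q : (1:ℝ) ≤ 1 / q := (le_div_iff₀ hq).2 (by linarith)
  have h := NNReal.rpow_add_le_mul_rpow_add_rpow (s ^ q) (t ^ q) h1q
  have hs : (s ^ q) ^ (1/q) = s := by
    rw [← NNReal.rpow_mul, mul_one_div, div_self hq.ne', NNReal.rpow_one]
  have ht : (t ^ q) ^ (1/q) = t := by
    rw [← NNReal.rpow_mul, mul_one_div, div_self hq.ne', NNReal.rpow_one]
  rw [hs, ht] at h
  have h2 := NNReal.rpow_le_rpow h hq.le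
  rw [← NNReal.rpow_mul, one_div, inv_mul_cancel₀ hq.ne', NNReal.rpow_one,
    NNReal.mul_rpow, ← NNReal.rpow_mul] at h2
  have hqq : (q⁻¹ - 1) * q = 1 - q := by field_simp
  rwa [hqq] at h2

lemma real_concave (s t : ℝ) (hs : 0 ≤ s) (ht : 0 ≤ t) {q : ℝ} (hq : 0 < q) (hq1 : q ≤ 1) :
    s ^ q + t ^ q ≤ 2 ^ (1 - q) * (s + t) ^ q := by
  lift s to ℝ≥0 using hs
  lift t to ℝ≥0 using ht
  exact_mod_cast nn_concave s t hq hq1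

lemma real_subadd (s t : ℝ) (hs : 0 ≤ s) (ht : 0 ≤ t) {q : ℝ} (hq : 0 ≤ q) (hq1 : q ≤ 1) :
    (s + t) ^ q ≤ s ^ q + t ^ q := by
  lift s to ℝ≥0 using hs
  lift t to ℝ≥0 using ht
  exact_mod_cast NNReal.rpow_add_le_add_rpow s t hq hq1

lemma clark (p : ℝ) (hp : 1 ≤ p) (hp2 : p ≤ 2) (u v : ℝ) :
    |u + v| ^ p + |u - v| ^ p ≤ 2 * (|u| ^ p + |v| ^ p) := by
  set q := p / 2 with hqdef
  have hq : 0 < q := by positivity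
  have hq1 : q ≤ 1 := by rw [hqdef]; linarith
  have habs : ∀ z : ℝ, |z| ^ p = (z ^ 2) ^ q := by
    intro z
    have hz : (z ^ 2 : ℝ) = |z| ^ (2:ℝ) := by
      rw [← sq_abs, ← Real.rpow_natCast (|z|) 2]; norm_num
    have h2q : 2 * q = p := by rw [hqdef]; ring
    rw [hz, ← Real.rpow_mul (abs_nonneg z), h2q]
  rw [habs, habs, habs, habs]
  have h1 : ((u+v)^2) ^ q + ((u-v)^2) ^ q ≤ 2 ^ (1 - q) * ((u+v)^2 + (u-v)^2) ^ q :=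
    real_concave _ _ (sq_nonneg _) (sq_nonneg _) hq hq1
  have h2 : (u+v)^2 + (u-v)^2 = 2 * (u^2 + v^2) := by ring
  rw [h2] at h1
  have h3 : (2 * (u^2 + v^2)) ^ q = 2 ^ q * (u^2 + v^2) ^ q :=
    Real.mul_rpow (by norm_num) (by positivity)
  rw [h3, ← mul_assoc, ← Real.rpow_add (by norm_num)] at h1
  have h4 : (1 - q) + q = 1 := by ring
  rw [h4, Real.rpow_one] at h1
  refine h1.trans ?_
  have h5 : (u^2 + v^2) ^ q ≤ (u^2) ^ q + (v^2) ^ q :=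
    real_subadd _ _ (sq_nonneg _) (sq_nonneg _) hq.le hq1
  linarith

/-- Clarkson's inequality (reverse form) for real numbers, `1 < p ≤ 2`. -/
theorem stmt11 (p : ℝ) (hp : 1 < p) (hp2 : p ≤ 2) (x y : ℝ) :
    2 ^ (p - 1) * (|x| ^ p + |y| ^ p) ≤ |x + y| ^ p + |x - y| ^ p := by
  have key := clark p hp.le hp2 (x + y) (x - y)
  have e1 : x + y + (x - y) = 2 * x := by ring
  have e2 : x + y - (x - y) = 2 * y := by ring
  rw [e1, e2] at key
  have habs : ∀ z : ℝ, |2 * z| ^ p = 2 ^ p * |z| ^ p := by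
    intro z
    rw [abs_mul, Real.mul_rpow (abs_nonneg _) (abs_nonneg _)]
    norm_num
  rw [habs, habs] at key
  have h2p : (2:ℝ) ^ (p - 1) * 2 = 2 ^ p := by
    rw [show p - 1 = p + (-1) by ring, Real.rpow_add (by norm_num : (0:ℝ)<2),
      Real.rpow_neg_one]
    ring
  nlinarith [Real.rpow_nonneg (abs_nonneg (x+y)) p, Real.rpow_nonneg (abs_nonneg (x-y)) p,
    Real.rpow_pos_of_pos (by norm_num : (0:ℝ)<2) p, Real.rpow_pos_of_pos (by norm_num : (0:ℝ)<2) (p-1)]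
end

section
/- Let 1 ≤ p ≤ 2, s > 0, let Λ : ℝ → [0,∞) be an even function, and v ∈ ℝ. Then ∫_{-s}^{s} e^{-|u+v|^p} Λ(u) du ≥ e^{-|v|^p} ∫_{-s}^{s} e^{-|u|^p} Λ(u) du. -/
open Real MeasureTheory intervalIntegral NNReal

/-- Power-mean inequality: for `0 < q ≤ 1`, `X^q + Y^q ≤ 2^(1-q) (X+Y)^q`. -/
private lemma pm_ineq {q : ℝ} (hq0 : 0 < q) (hq1 : q ≤ 1) (X Y : ℝ≥0) :
    X ^ q + Y ^ q ≤ 2 ^ (1 - q) * (X + Y) ^ q := by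
  have h := NNReal.rpow_add_le_mul_rpow_add_rpow (X ^ q) (Y ^ q) (p := 1 / q)
    (by rw [le_div_iff₀ hq0]; simpa using hq1)
  rw [← NNReal.rpow_mul, ← NNReal.rpow_mul, mul_one_div_cancel hq0.ne', NNReal.rpow_one,
    NNReal.rpow_one] at h
  have h2 := NNReal.rpow_le_rpow h hq0.le
  rw [← NNReal.rpow_mul, one_div_mul_cancel hq0.ne', NNReal.rpow_one, NNReal.mul_rpow,
    ← NNReal.rpow_mul] at h2
  have : (1 / q - 1) * q = 1 - q := by field_simp
  rwa [this] at h2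

/-- Clarkson-type inequality in `ℝ≥0`. -/
private lemma clarkson_nnreal {p : ℝ} (hp : 1 ≤ p) (hp2 : p ≤ 2) (A B C D : ℝ≥0)
    (hpar : A ^ (2 : ℕ) + B ^ (2 : ℕ) = 2 * (C ^ (2 : ℕ) + D ^ (2 : ℕ))) :
    A ^ p + B ^ p ≤ 2 * (C ^ p + D ^ p) := by
  set q := p / 2 with hq
  have hq0 : 0 < q := by positivity
  have hq1 : q ≤ 1 := by rw [hq]; linarith
  have hmul : ∀ x : ℝ≥0, x ^ p = (x ^ (2 : ℕ)) ^ q := by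
    intro x
    rw [← NNReal.rpow_natCast x 2, ← NNReal.rpow_mul]
    congr 1
    rw [hq]; push_cast; ring
  calc A ^ p + B ^ p = (A ^ (2 : ℕ)) ^ q + (B ^ (2 : ℕ)) ^ q := by rw [hmul, hmul]
    _ ≤ 2 ^ (1 - q) * (A ^ (2 : ℕ) + B ^ (2 : ℕ)) ^ q := pm_ineq hq0 hq1 _ _
    _ = 2 ^ (1 - q) * (2 * (C ^ (2 : ℕ) + D ^ (2 : ℕ))) ^ q := by rw [hpar]
    _ = 2 ^ (1 - q) * (2 ^ q * (C ^ (2 : ℕ) + D ^ (2 : ℕ)) ^ q) := by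
        rw [NNReal.mul_rpow]
    _ = 2 * (C ^ (2 : ℕ) + D ^ (2 : ℕ)) ^ q := by
        have h2 : (2 : ℝ≥0) ^ (1 - q) * 2 ^ q = 2 := by
          rw [← NNReal.rpow_add two_ne_zero, sub_add_cancel, NNReal.rpow_one]
        rw [← mul_assoc, h2]
    _ ≤ 2 * ((C ^ (2 : ℕ)) ^ q + (D ^ (2 : ℕ)) ^ q) := by
        gcongr
        exact NNReal.rpow_add_le_add_rpow _ _ hq0.le hq1
    _ = 2 * (C ^ p + D ^ p) := by rw [hmul, hmul]

/-- Clarkson-type inequality for real absolute values. -/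
private lemma clarkson {p : ℝ} (hp : 1 ≤ p) (hp2 : p ≤ 2) (u v : ℝ) :
    |u + v| ^ p + |u - v| ^ p ≤ 2 * (|u| ^ p + |v| ^ p) := by
  have hpar : ‖u + v‖₊ ^ (2 : ℕ) + ‖u - v‖₊ ^ (2 : ℕ)
      = 2 * (‖u‖₊ ^ (2 : ℕ) + ‖v‖₊ ^ (2 : ℕ)) := by
    apply NNReal.coe_injective
    push_cast [coe_nnnorm, Real.norm_eq_abs]
    rw [sq_abs, sq_abs, sq_abs, sq_abs]; ring
  have h := clarkson_nnreal hp hp2 ‖u + v‖₊ ‖u - v‖₊ ‖u‖₊ ‖v‖₊ hpar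
  have h' := NNReal.coe_le_coe.2 h
  push_cast [NNReal.coe_rpow, coe_nnnorm, Real.norm_eq_abs] at h'
  linarith

/-- Pointwise inequality `2 e^{-|v|^p} e^{-|u|^p} ≤ e^{-|u+v|^p} + e^{-|u-v|^p}`. -/
private lemma ptwise {p : ℝ} (hp : 1 ≤ p) (hp2 : p ≤ 2) (u v : ℝ) :
    2 * (Real.exp (-|v| ^ p) * Real.exp (-|u| ^ p)) ≤
      Real.exp (-|u + v| ^ p) + Real.exp (-|u - v| ^ p) := by
  set a := |u + v| ^ p with ha
  set b := |u - v| ^ p with hb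
  have key : a + b ≤ 2 * (|u| ^ p + |v| ^ p) := clarkson hp hp2 u v
  calc 2 * (Real.exp (-|v| ^ p) * Real.exp (-|u| ^ p))
      = 2 * Real.exp (-(|u| ^ p + |v| ^ p)) := by rw [← Real.exp_add]; ring_nf
    _ ≤ 2 * Real.exp (-((a + b) / 2)) := by
        have : -(|u| ^ p + |v| ^ p) ≤ -((a + b) / 2) := by linarith
        have := Real.exp_le_exp.2 this
        linarith
    _ = 2 * (Real.exp (-(a / 2)) * Real.exp (-(b / 2))) := by rw [← Real.exp_add]; ring_nf
    _ ≤ Real.exp (-(a / 2)) ^ 2 + Real.exp (-(b / 2)) ^ 2 := by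
        have := two_mul_le_add_sq (Real.exp (-(a / 2))) (Real.exp (-(b / 2)))
        linarith
    _ = Real.exp (-a) + Real.exp (-b) := by
        rw [sq, sq, ← Real.exp_add, ← Real.exp_add]; ring_nf

private lemma cont_exp_shift (p : ℝ) (hp : 0 ≤ p) (c : ℝ) :
    Continuous fun u : ℝ => Real.exp (-|u + c| ^ p) := by
  have h1 : Continuous fun u : ℝ => |u + c| := (continuous_id.add continuous_const).abs
  exact Real.continuous_exp.comp ((h1.rpow_const fun x => Or.inr hp).neg)

/-- Shift inequality for the Besov-type density `e^{-|·|^p}`, `1 ≤ p ≤ 2`,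
against an even nonnegative weight `Λ`. -/
theorem stmt14 (p : ℝ) (hp : 1 ≤ p) (hp2 : p ≤ 2) (s : ℝ) (hs : 0 < s)
    (Λ : ℝ → ℝ) (hΛ0 : ∀ x, 0 ≤ Λ x) (hΛeven : ∀ x, Λ (-x) = Λ x) (v : ℝ) :
    Real.exp (-|v| ^ p) * ∫ u in (-s)..s, Real.exp (-|u| ^ p) * Λ u ≤
      ∫ u in (-s)..s, Real.exp (-|u + v| ^ p) * Λ u := by
  have hp0 : (0 : ℝ) ≤ p := by linarith
  by_cases hΛ : IntervalIntegrable Λ volume (-s) s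
  · -- integrable case
    have hint : ∀ c : ℝ, IntervalIntegrable (fun u => Real.exp (-|u + c| ^ p) * Λ u)
        volume (-s) s := fun c => hΛ.continuousOn_mul (cont_exp_shift p hp0 c).continuousOn
    have hint0 : IntervalIntegrable (fun u => Real.exp (-|u| ^ p) * Λ u) volume (-s) s := by
      have := hint 0
      simpa using this
    -- symmetrization
    have hsym : (∫ u in (-s)..s, Real.exp (-|u + v| ^ p) * Λ u)
        = ∫ u in (-s)..s, Real.exp (-|u - v| ^ p) * Λ u := by
      have h := intervalIntegral.integral_comp_neg
        (a := -s) (b := s) (fun u => Real.exp (-|u + v| ^ p) * Λ u)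
      rw [neg_neg] at h
      rw [← h]
      congr 1
      funext u
      have : |-u + v| = |u - v| := by rw [← abs_neg]; ring_nf
      rw [this, hΛeven]
    have hintv' : IntervalIntegrable (fun u => Real.exp (-|u - v| ^ p) * Λ u) volume (-s) s := by
      have := hint (-v)
      simpa [sub_eq_add_neg] using this
    have hmono : (∫ u in (-s)..s, (2 * Real.exp (-|v| ^ p)) * (Real.exp (-|u| ^ p) * Λ u))
        ≤ ∫ u in (-s)..s, (Real.exp (-|u + v| ^ p) * Λ u + Real.exp (-|u - v| ^ p) * Λ u) := by
      apply intervalIntegral.integral_mono_on (by linarith) (hint0.const_mul _)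
        ((hint v).add hintv')
      intro x hx
      have h1 := ptwise hp hp2 x v
      have h2 := mul_le_mul_of_nonneg_right h1 (hΛ0 x)
      nlinarith [hΛ0 x]
    rw [intervalIntegral.integral_add (hint v) hintv', ← hsym,
      intervalIntegral.integral_const_mul] at hmono
    linarith
  · -- non-integrable case: both integrals are zero
    have habs : ∀ c : ℝ, ¬ IntervalIntegrable (fun u => Real.exp (-|u + c| ^ p) * Λ u)
        volume (-s) s := by
      intro c h
      apply hΛ
      have h2 := h.continuousOn_mul (g := fun u => Real.exp (|u + c| ^ p))
        (by
          have h1 : Continuous fun u : ℝ => |u + c| := (continuous_id.add continuous_const).abs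
          exact (Real.continuous_exp.comp (h1.rpow_const fun x => Or.inr hp0)).continuousOn)
      have : (fun x => Real.exp (|x + c| ^ p) * (Real.exp (-|x + c| ^ p) * Λ x)) = Λ := by
        funext x
        rw [← mul_assoc, ← Real.exp_add, add_neg_cancel, Real.exp_zero, one_mul]
      rwa [this] at h2
    have h0 : ¬ IntervalIntegrable (fun u => Real.exp (-|u| ^ p) * Λ u) volume (-s) s := by
      have := habs 0
      simpa using this
    rw [intervalIntegral.integral_undef h0, intervalIntegral.integral_undef (habs v)]
    simp
end

section
/- Let ρ(u) ∝ exp(-|u|^p) with 1 ≤ p ≤ 2, and let V_r(h,a,b) be as above with ρ_k(x) = γ_k^{-1} ρ(γ_k^{-1} x). Then for any h with |h_k/γ_k| ≤ 1 for k ∈ [a+1:b], V_r(h,a,b) ≥ V_r(0,a,b) · Π_{k=a+1}^b exp(-|h_k/γ_k|^p). -/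
open MeasureTheory

/-- Lebesgue volume of the weighted `ℓ^p`-ball `{v : ℝ^a | ∑ |v_i/α_i|^p < t}`. -/
noncomputable def sliceBallVol (p : ℝ) {a : ℕ} (α₁ : Fin a → ℝ) (t : ℝ) : ℝ :=
  (volume {v : Fin a → ℝ | ∑ i, |v i / α₁ i| ^ p < t}).toReal

/-- `V_r(h,a,b)`. -/
noncomputable def Vr (p r : ℝ) {a c : ℕ} (α₁ : Fin a → ℝ) (α₂ : Fin c → ℝ)
    (ρ₂ : Fin c → ℝ → ℝ) (h₂ : Fin c → ℝ) : ℝ :=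
  ∫ u in {u : Fin c → ℝ | ∑ j, |u j / α₂ j| ^ p < r ^ p},
    (∏ j, ρ₂ j (u j + h₂ j)) *
      sliceBallVol p α₁ (r ^ p - ∑ j, |u j / α₂ j| ^ p)

/-! ### Scalar inequalities -/

lemma my_rpow_add_le_add_rpow {x y q : ℝ} (hx : 0 ≤ x) (hy : 0 ≤ y) (hq : 0 ≤ q) (hq1 : q ≤ 1) :
    (x + y) ^ q ≤ x ^ q + y ^ q := by
  have h := NNReal.rpow_add_le_add_rpow ⟨x, hx⟩ ⟨y, hy⟩ hq hq1
  have h2 := NNReal.coe_le_coe.2 h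
  push_cast [NNReal.coe_rpow] at h2
  exact h2

lemma my_abs_rpow_eq_sq_rpow {p : ℝ} (y : ℝ) : |y| ^ p = (y ^ 2) ^ (p / 2) := by
  rw [← sq_abs y, ← Real.rpow_natCast |y| 2, ← Real.rpow_mul (abs_nonneg y)]
  congr 1; push_cast; ring

lemma my_clarkson {p : ℝ} (hp : 1 ≤ p) (hp2 : p ≤ 2) (x b : ℝ) :
    |x + b| ^ p + |x - b| ^ p ≤ 2 * (|x| ^ p + |b| ^ p) := by
  set q := p / 2 with hq
  have hq0 : 0 ≤ q := by rw [hq]; linarith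
  have hq1 : q ≤ 1 := by rw [hq]; linarith
  have habs : ∀ y : ℝ, |y| ^ p = (y ^ 2) ^ q := fun y => my_abs_rpow_eq_sq_rpow y
  rw [habs, habs, habs, habs]
  have hpar : (x + b) ^ 2 + (x - b) ^ 2 = 2 * (x ^ 2 + b ^ 2) := by ring
  have hconc : ∀ A B : ℝ, 0 ≤ A → 0 ≤ B → A ^ q + B ^ q ≤ 2 * ((A + B) / 2) ^ q := by
    intro A B hA hB
    have := (Real.concaveOn_rpow hq0 hq1).2 (Set.mem_Ici.2 hA) (Set.mem_Ici.2 hB)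
      (by norm_num : (0:ℝ) ≤ 1/2) (by norm_num : (0:ℝ) ≤ 1/2) (by norm_num)
    simp only [smul_eq_mul] at this
    rw [show (1/2:ℝ) * A + 1/2 * B = (A + B) / 2 from by ring] at this
    linarith
  calc ((x + b) ^ 2) ^ q + ((x - b) ^ 2) ^ q
      ≤ 2 * (((x + b) ^ 2 + (x - b) ^ 2) / 2) ^ q := hconc _ _ (sq_nonneg _) (sq_nonneg _)
    _ = 2 * (x ^ 2 + b ^ 2) ^ q := by rw [hpar]; ring_nf
    _ ≤ 2 * ((x ^ 2) ^ q + (b ^ 2) ^ q) := by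
        have := my_rpow_add_le_add_rpow (sq_nonneg x) (sq_nonneg b) hq0 hq1
        linarith

lemma my_two_point {p : ℝ} (hp : 1 ≤ p) (hp2 : p ≤ 2) (x b : ℝ) :
    Real.exp (-|b| ^ p) * Real.exp (-|x| ^ p) ≤
      (Real.exp (-|x + b| ^ p) + Real.exp (-|x - b| ^ p)) / 2 := by
  have hC := my_clarkson hp hp2 x b
  set A := |x + b| ^ p
  set B := |x - b| ^ p
  have key : Real.exp (-(A + B) / 2) ≤ (Real.exp (-A) + Real.exp (-B)) / 2 := by
    have h1 : Real.exp (-A) = Real.exp (-(A+B)/2 + (B - A)/2) := by ring_nf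
    have h2 : Real.exp (-B) = Real.exp (-(A+B)/2 + (A - B)/2) := by ring_nf
    rw [h1, h2, Real.exp_add, Real.exp_add]
    have hE : 0 < Real.exp (-(A+B)/2) := Real.exp_pos _
    nlinarith [Real.exp_pos ((B-A)/2), Real.exp_pos ((A-B)/2),
      Real.add_one_le_exp ((B - A)/2), Real.add_one_le_exp ((A - B)/2)]
  calc Real.exp (-|b| ^ p) * Real.exp (-|x| ^ p) = Real.exp (-(|b| ^ p + |x| ^ p)) := by
        rw [← Real.exp_add]; ring_nf
    _ ≤ Real.exp (-(A + B) / 2) := by apply Real.exp_le_exp.2; linarith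
    _ ≤ _ := key

/-! ### Measure-theoretic setup -/

lemma my_ball_vol_ne_top {p : ℝ} (hp0 : 0 < p) {n : ℕ} {α : Fin n → ℝ}
    (hα : ∀ i, 0 < α i) (t : ℝ) :
    volume {v : Fin n → ℝ | ∑ i, |v i / α i| ^ p < t} ≠ ⊤ := by
  rcases le_or_gt t 0 with ht | ht
  · have he : {v : Fin n → ℝ | ∑ i, |v i / α i| ^ p < t} = ∅ := by
      ext v
      simp only [Set.mem_setOf_eq, Set.mem_empty_iff_false, iff_false, not_lt]
      exact le_trans ht (Finset.sum_nonneg fun i _ => Real.rpow_nonneg (abs_nonneg _) _)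
    simp [he]
  · set R := t ^ (1/p) with hR
    have hRpos : 0 < R := Real.rpow_pos_of_pos ht _
    have hRp : R ^ p = t := by
      rw [hR, ← Real.rpow_mul ht.le, one_div, inv_mul_cancel₀ hp0.ne', Real.rpow_one]
    have hsub : {v : Fin n → ℝ | ∑ i, |v i / α i| ^ p < t} ⊆
        Set.univ.pi fun i => Set.Ioo (-(α i * R)) (α i * R) := by
      intro v hv i _
      have hterm : |v i / α i| ^ p ≤ ∑ k, |v k / α k| ^ p :=
        Finset.single_le_sum (f := fun k => |v k / α k| ^ p)
          (fun k _ => Real.rpow_nonneg (abs_nonneg _) _) (Finset.mem_univ i)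
      have h1 : |v i / α i| ^ p < t := lt_of_le_of_lt hterm hv
      have h2 : |v i / α i| < R := by
        by_contra hcon
        push_neg at hcon
        have := Real.rpow_le_rpow hRpos.le hcon hp0.le
        rw [hRp] at this
        linarith
      have h3 : |v i| < α i * R := by
        rw [abs_div, abs_of_pos (hα i)] at h2
        have := (div_lt_iff₀ (hα i)).1 h2
        linarith [this]
      exact Set.mem_Ioo.2 (abs_lt.1 h3)
    refine ne_top_of_le_ne_top ?_ (measure_mono hsub)
    rw [volume_pi_pi]
    exact (ENNReal.prod_lt_top fun i _ => by simp [Real.volume_Ioo]).ne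

lemma my_sliceBallVol_nonneg (p : ℝ) {a : ℕ} (α₁ : Fin a → ℝ) (t : ℝ) :
    0 ≤ sliceBallVol p α₁ t := ENNReal.toReal_nonneg

lemma my_sliceBallVol_mono {p : ℝ} (hp0 : 0 < p) {a : ℕ} {α₁ : Fin a → ℝ}
    (hα : ∀ i, 0 < α₁ i) {t₁ t₂ : ℝ} (h : t₁ ≤ t₂) :
    sliceBallVol p α₁ t₁ ≤ sliceBallVol p α₁ t₂ :=
  ENNReal.toReal_mono (my_ball_vol_ne_top hp0 hα t₂)
    (measure_mono fun v hv => lt_of_lt_of_le hv h)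

section Main

variable {p r : ℝ} {a c : ℕ} {α₁ : Fin a → ℝ} {α₂ : Fin c → ℝ}

/-- the `W` function -/
noncomputable def Wfn (p r : ℝ) {a c : ℕ} (α₁ : Fin a → ℝ) (α₂ : Fin c → ℝ)
    (u : Fin c → ℝ) : ℝ :=
  sliceBallVol p α₁ (r ^ p - ∑ j, |u j / α₂ j| ^ p)

/-- the domain `S` -/
def Sset (p r : ℝ) {c : ℕ} (α₂ : Fin c → ℝ) : Set (Fin c → ℝ) :=
  {u | ∑ j, |u j / α₂ j| ^ p < r ^ p}

/-- the functional `I` -/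
noncomputable def Ifn (p r : ℝ) {a c : ℕ} (α₁ : Fin a → ℝ) (α₂ : Fin c → ℝ)
    (f : Fin c → ℝ → ℝ) : ℝ :=
  ∫ u in Sset p r α₂, (∏ j, f j (u j)) * Wfn p r α₁ α₂ u

lemma Vr_eq_Ifn (p r : ℝ) (α₁ : Fin a → ℝ) (α₂ : Fin c → ℝ) (ρ₂ : Fin c → ℝ → ℝ)
    (h₂ : Fin c → ℝ) :
    Vr p r α₁ α₂ ρ₂ h₂ = Ifn p r α₁ α₂ (fun j x => ρ₂ j (x + h₂ j)) := rfl

lemma contQ (hp0 : 0 ≤ p) : Continuous fun u : Fin c → ℝ => ∑ j, |u j / α₂ j| ^ p :=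
  continuous_finset_sum _ fun j _ =>
    (((by fun_prop : Continuous fun u : Fin c → ℝ => u j / α₂ j)).abs).rpow_const fun _ => Or.inr hp0

lemma measurableSet_Sset (hp0 : 0 ≤ p) : MeasurableSet (Sset p r α₂) :=
  ((isOpen_lt (contQ hp0) continuous_const)).measurableSet

lemma volume_Sset_ne_top (hp0 : 0 < p) (hα₂ : ∀ j, 0 < α₂ j) :
    volume (Sset p r α₂) ≠ ⊤ :=
  my_ball_vol_ne_top hp0 hα₂ (r ^ p)

lemma measurable_Wfn (hp0 : 0 < p) (hα₁ : ∀ i, 0 < α₁ i) :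
    Measurable (Wfn p r α₁ α₂) := by
  have hmono : Monotone (sliceBallVol p α₁) := fun t₁ t₂ h =>
    my_sliceBallVol_mono hp0 hα₁ h
  exact hmono.measurable.comp (continuous_const.sub (contQ hp0.le)).measurable

lemma Wfn_nonneg (u : Fin c → ℝ) : 0 ≤ Wfn p r α₁ α₂ u :=
  my_sliceBallVol_nonneg _ _ _

lemma Wfn_le (hp0 : 0 < p) (hα₁ : ∀ i, 0 < α₁ i) (u : Fin c → ℝ) :
    Wfn p r α₁ α₂ u ≤ sliceBallVol p α₁ (r ^ p) :=
  my_sliceBallVol_mono hp0 hα₁ (by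
    have : (0:ℝ) ≤ ∑ j, |u j / α₂ j| ^ p :=
      Finset.sum_nonneg fun j _ => Real.rpow_nonneg (abs_nonneg _) _
    linarith)

lemma measurable_flipFun (c : ℕ) (j : Fin c) :
    Measurable fun (u : Fin c → ℝ) i => if i = j then -u i else u i :=
  measurable_pi_iff.2 fun i => by
    by_cases h : i = j
    · simp only [h, if_true]
      exact (measurable_pi_apply _).neg
    · simp only [h, if_false]
      exact measurable_pi_apply _

/-- flipping one coordinate -/
def flipC (c : ℕ) (j : Fin c) : (Fin c → ℝ) ≃ᵐ (Fin c → ℝ) where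
  toEquiv :=
  { toFun := fun u i => if i = j then -u i else u i
    invFun := fun u i => if i = j then -u i else u i
    left_inv := fun u => by funext i; by_cases h : i = j <;> simp [h]
    right_inv := fun u => by funext i; by_cases h : i = j <;> simp [h] }
  measurable_toFun := measurable_flipFun c j
  measurable_invFun := measurable_flipFun c j

@[simp] lemma flipC_apply (j : Fin c) (u : Fin c → ℝ) (i : Fin c) :
    flipC c j u i = if i = j then -u i else u i := rfl

lemma flipC_measurePreserving (j : Fin c) :
    MeasurePreserving (flipC c j) (volume : Measure (Fin c → ℝ)) volume := by
  have h := measurePreserving_pi (fun _ : Fin c => (volume : Measure ℝ))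
    (fun _ => (volume : Measure ℝ))
    (f := fun i (x : ℝ) => if i = j then -x else x) (fun i => by
      by_cases h : i = j
      · simp only [h, if_true]
        exact Measure.measurePreserving_neg _
      · simp only [h, if_false]
        exact MeasurePreserving.id _)
  rw [volume_pi] at *
  convert h using 1
  all_goals rfl

lemma Q_flip (j : Fin c) (u : Fin c → ℝ) :
    ∑ k, |flipC c j u k / α₂ k| ^ p = ∑ k, |u k / α₂ k| ^ p := by
  refine Finset.sum_congr rfl fun k _ => ?_
  by_cases h : k = j <;> simp [h, neg_div, abs_neg]

lemma Sset_flip_preimage (j : Fin c) : (flipC c j) ⁻¹' (Sset p r α₂) = Sset p r α₂ := by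
  ext u
  simp only [Set.mem_preimage, Sset, Set.mem_setOf_eq, Q_flip]

lemma Wfn_flip (j : Fin c) (u : Fin c → ℝ) :
    Wfn p r α₁ α₂ (flipC c j u) = Wfn p r α₁ α₂ u := by
  unfold Wfn
  rw [Q_flip]

lemma integral_flip (j : Fin c) (g : (Fin c → ℝ) → ℝ) :
    ∫ u in Sset p r α₂, g (flipC c j u) = ∫ u in Sset p r α₂, g u := by
  have hmp := (flipC_measurePreserving (c := c) j).restrict_preimage_emb
    (MeasurableEquiv.measurableEmbedding _) (Sset p r α₂)
  rw [Sset_flip_preimage] at hmp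
  exact hmp.integral_comp (MeasurableEquiv.measurableEmbedding _) g

lemma integrableOn_I (hp0 : 0 < p) (hα₁ : ∀ i, 0 < α₁ i) (hα₂ : ∀ j, 0 < α₂ j)
    (f : Fin c → ℝ → ℝ) (hm : ∀ j, Measurable (f j)) (h0 : ∀ j x, 0 ≤ f j x)
    (h1 : ∀ j x, f j x ≤ 1) :
    IntegrableOn (fun u => (∏ j, f j (u j)) * Wfn p r α₁ α₂ u) (Sset p r α₂) volume := by
  have hGm : Measurable fun u : Fin c → ℝ => (∏ j, f j (u j)) * Wfn p r α₁ α₂ u :=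
    (Finset.measurable_prod _ fun j _ => (hm j).comp (measurable_pi_apply j)).mul
      (measurable_Wfn hp0 hα₁)
  refine Integrable.mono' (g := fun _ => sliceBallVol p α₁ (r ^ p))
    (integrableOn_const (volume_Sset_ne_top hp0 hα₂))
    hGm.aestronglyMeasurable ?_
  filter_upwards with u
  have hprod0 : 0 ≤ ∏ j, f j (u j) := Finset.prod_nonneg fun j _ => h0 j _
  have hprod1 : ∏ j, f j (u j) ≤ 1 := Finset.prod_le_one (fun j _ => h0 j _) fun j _ => h1 j _
  rw [Real.norm_eq_abs, abs_of_nonneg (mul_nonneg hprod0 (Wfn_nonneg u))]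
  calc (∏ j, f j (u j)) * Wfn p r α₁ α₂ u ≤ 1 * Wfn p r α₁ α₂ u :=
        mul_le_mul_of_nonneg_right hprod1 (Wfn_nonneg u)
    _ = Wfn p r α₁ α₂ u := one_mul _
    _ ≤ sliceBallVol p α₁ (r ^ p) := Wfn_le hp0 hα₁ u

lemma prod_update_eval (f : Fin c → ℝ → ℝ) (j : Fin c) (φ : ℝ → ℝ) (u : Fin c → ℝ) :
    ∏ k, Function.update f j φ k (u k) =
      φ (u j) * ∏ k ∈ Finset.univ.erase j, f k (u k) := by
  rw [← Finset.mul_prod_erase Finset.univ (fun k => Function.update f j φ k (u k))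
    (Finset.mem_univ j)]
  congr 1
  · simp
  · exact Finset.prod_congr rfl fun k hk => by
      rw [Function.update_of_ne (Finset.ne_of_mem_erase hk)]

lemma flip_eq (f : Fin c → ℝ → ℝ) (j : Fin c) :
    Ifn p r α₁ α₂ f = Ifn p r α₁ α₂ (Function.update f j fun x => f j (-x)) := by
  have hpt : ∀ u : Fin c → ℝ,
      (∏ k, Function.update f j (fun x => f j (-x)) k (flipC c j u k)) *
        Wfn p r α₁ α₂ (flipC c j u) = (∏ k, f k (u k)) * Wfn p r α₁ α₂ u := by
    intro u
    rw [Wfn_flip]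
    congr 1
    refine Finset.prod_congr rfl fun k _ => ?_
    by_cases hk : k = j
    · subst hk
      simp
    · simp [hk]
  calc Ifn p r α₁ α₂ f
      = ∫ u in Sset p r α₂,
          (∏ k, Function.update f j (fun x => f j (-x)) k (flipC c j u k)) *
            Wfn p r α₁ α₂ (flipC c j u) := by
        unfold Ifn
        exact integral_congr_ae (Filter.Eventually.of_forall fun u => (hpt u).symm)
    _ = ∫ u in Sset p r α₂,
          (∏ k, Function.update f j (fun x => f j (-x)) k (u k)) * Wfn p r α₁ α₂ u :=
        integral_flip j (fun v => (∏ k, Function.update f j (fun x => f j (-x)) k (v k)) *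
          Wfn p r α₁ α₂ v)
    _ = Ifn p r α₁ α₂ (Function.update f j fun x => f j (-x)) := rfl

lemma sym_step (hp0 : 0 < p) (hα₁ : ∀ i, 0 < α₁ i) (hα₂ : ∀ j, 0 < α₂ j)
    (f : Fin c → ℝ → ℝ) (hm : ∀ j, Measurable (f j)) (h0 : ∀ j x, 0 ≤ f j x)
    (h1 : ∀ j x, f j x ≤ 1) (j : Fin c) :
    Ifn p r α₁ α₂ f = Ifn p r α₁ α₂
      (Function.update f j fun x => (f j x + f j (-x)) / 2) := by
  have hflip := flip_eq (p := p) (r := r) (α₁ := α₁) (α₂ := α₂) f j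
  set g : Fin c → ℝ → ℝ := Function.update f j fun x => f j (-x) with hg
  have hmg : ∀ k, Measurable (g k) := fun k => by
    by_cases hk : k = j
    · rw [hg, hk, Function.update_self]; exact (hm j).comp measurable_neg
    · rw [hg, Function.update_of_ne hk]; exact hm k
  have h0g : ∀ k x, 0 ≤ g k x := fun k x => by
    by_cases hk : k = j
    · rw [hg, hk, Function.update_self]; exact h0 j _
    · rw [hg, Function.update_of_ne hk]; exact h0 k x
  have h1g : ∀ k x, g k x ≤ 1 := fun k x => by
    by_cases hk : k = j
    · rw [hg, hk, Function.update_self]; exact h1 j _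
    · rw [hg, Function.update_of_ne hk]; exact h1 k x
  have hif := integrableOn_I (r := r) hp0 hα₁ hα₂ f hm h0 h1
  have hig := integrableOn_I (r := r) hp0 hα₁ hα₂ g hmg h0g h1g
  have key : Ifn p r α₁ α₂ (Function.update f j fun x => (f j x + f j (-x)) / 2) =
      (Ifn p r α₁ α₂ f + Ifn p r α₁ α₂ g) / 2 := by
    unfold Ifn
    have hpt : ∀ u : Fin c → ℝ,
        (∏ k, Function.update f j (fun x => (f j x + f j (-x)) / 2) k (u k)) *
          Wfn p r α₁ α₂ u =
        ((∏ k, f k (u k)) * Wfn p r α₁ α₂ u + (∏ k, g k (u k)) * Wfn p r α₁ α₂ u) / 2 := by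
      intro u
      rw [prod_update_eval]
      have hf : ∏ k, f k (u k) = f j (u j) * ∏ k ∈ Finset.univ.erase j, f k (u k) :=
        Finset.mul_prod_erase Finset.univ _ (Finset.mem_univ j) |>.symm
      have hgp : ∏ k, g k (u k) = f j (-u j) * ∏ k ∈ Finset.univ.erase j, f k (u k) := by
        rw [hg, prod_update_eval]
      rw [hf, hgp]
      ring
    calc ∫ u in Sset p r α₂,
          (∏ k, Function.update f j (fun x => (f j x + f j (-x)) / 2) k (u k)) *
            Wfn p r α₁ α₂ u
        = ∫ u in Sset p r α₂,
            ((∏ k, f k (u k)) * Wfn p r α₁ α₂ u +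
              (∏ k, g k (u k)) * Wfn p r α₁ α₂ u) / 2 :=
          integral_congr_ae (Filter.Eventually.of_forall fun u => hpt u)
      _ = (∫ u in Sset p r α₂,
            ((∏ k, f k (u k)) * Wfn p r α₁ α₂ u +
              (∏ k, g k (u k)) * Wfn p r α₁ α₂ u)) / 2 := integral_div 2 _
      _ = ((∫ u in Sset p r α₂, (∏ k, f k (u k)) * Wfn p r α₁ α₂ u) +
            ∫ u in Sset p r α₂, (∏ k, g k (u k)) * Wfn p r α₁ α₂ u) / 2 := by
          rw [integral_add hif hig]
  rw [key, ← hflip]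
  ring

lemma all_sym (hp0 : 0 < p) (hα₁ : ∀ i, 0 < α₁ i) (hα₂ : ∀ j, 0 < α₂ j)
    (f : Fin c → ℝ → ℝ) (hm : ∀ j, Measurable (f j)) (h0 : ∀ j x, 0 ≤ f j x)
    (h1 : ∀ j x, f j x ≤ 1) :
    Ifn p r α₁ α₂ f = Ifn p r α₁ α₂ (fun j x => (f j x + f j (-x)) / 2) := by
  classical
  have main : ∀ s : Finset (Fin c), Ifn p r α₁ α₂ f =
      Ifn p r α₁ α₂ (fun j => if j ∈ s then (fun x => (f j x + f j (-x)) / 2) else f j) := by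
    intro s
    induction s using Finset.induction_on with
    | empty => simp
    | @insert b s hns ih =>
      set g : Fin c → ℝ → ℝ :=
        fun j => if j ∈ s then (fun x => (f j x + f j (-x)) / 2) else f j with hgdef
      have hmg : ∀ k, Measurable (g k) := fun k => by
        rw [hgdef]; dsimp only
        split_ifs
        · exact ((hm k).add ((hm k).comp measurable_neg)).div_const 2
        · exact hm k
      have h0g : ∀ k x, 0 ≤ g k x := fun k x => by
        rw [hgdef]; dsimp only
        split_ifs
        · have := h0 k x; have := h0 k (-x); positivity
        · exact h0 k x
      have h1g : ∀ k x, g k x ≤ 1 := fun k x => by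
        rw [hgdef]; dsimp only
        split_ifs
        · have := h1 k x; have := h1 k (-x); linarith
        · exact h1 k x
      have step := sym_step (r := r) hp0 hα₁ hα₂ g hmg h0g h1g b
      have hgb : g b = f b := by rw [hgdef]; simp [hns]
      have hupd : Function.update g b (fun x => (g b x + g b (-x)) / 2) =
          fun j => if j ∈ insert b s then (fun x => (f j x + f j (-x)) / 2) else f j := by
        funext k
        by_cases hk : k = b
        · subst hk
          rw [Function.update_self, hgb]
          simp
        · rw [Function.update_of_ne hk, hgdef]
          simp only [Finset.mem_insert, hk, false_or]
      rw [ih, step, hupd]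
  have := main Finset.univ
  simpa using this

end Main

/-! ### Main theorem -/

/-- For the Besov-type density `ρ(u) ∝ exp(-|u|^p)`, `1 ≤ p ≤ 2`, and shifts with
`|h_k/γ_k| ≤ 1`, `V_r(h,a,b) ≥ V_r(0,a,b) ⋅ ∏_k exp(-|h_k/γ_k|^p)`. -/
theorem stmt17 (p r : ℝ) (hp : 1 ≤ p) (hp2 : p ≤ 2) (hr : 0 < r)
    (a c : ℕ) (hc : 0 < c)
    (α₁ : Fin a → ℝ) (α₂ : Fin c → ℝ) (hα₁ : ∀ i, 0 < α₁ i) (hα₂ : ∀ j, 0 < α₂ j)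
    (γ : Fin c → ℝ) (hγ : ∀ j, 0 < γ j)
    (ρ : ℝ → ℝ) (Z : ℝ) (hZ : 0 < Z)
    (hρ : ∀ u, ρ u = Z * Real.exp (-|u| ^ p))
    (h₂ : Fin c → ℝ) (hh : ∀ j, |h₂ j / γ j| ≤ 1) :
    Vr p r α₁ α₂ (fun j x => (γ j)⁻¹ * ρ ((γ j)⁻¹ * x)) 0 *
        ∏ j, Real.exp (-|h₂ j / γ j| ^ p) ≤
      Vr p r α₁ α₂ (fun j x => (γ j)⁻¹ * ρ ((γ j)⁻¹ * x)) h₂ := by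
  have hp0 : 0 < p := lt_of_lt_of_le one_pos hp
  set C : ℝ := ∏ j, (γ j)⁻¹ * Z with hC
  have hC0 : 0 ≤ C := Finset.prod_nonneg fun j _ => mul_nonneg (inv_nonneg.2 (hγ j).le) hZ.le
  set Eh : Fin c → ℝ → ℝ := fun j x => Real.exp (-|(x + h₂ j) / γ j| ^ p) with hEh
  set E0 : Fin c → ℝ → ℝ := fun j x => Real.exp (-|x / γ j| ^ p) with hE0
  -- basic properties
  have hmEh : ∀ j, Measurable (Eh j) := fun j => by
    rw [hEh]
    have : Continuous fun x : ℝ => Real.exp (-|(x + h₂ j) / γ j| ^ p) :=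
      (Real.continuous_exp.comp
        ((((continuous_id.add continuous_const).div_const (γ j)).abs.rpow_const
          fun _ => Or.inr hp0.le).neg))
    exact this.measurable
  have hmE0 : ∀ j, Measurable (E0 j) := fun j => by
    rw [hE0]
    have : Continuous fun x : ℝ => Real.exp (-|x / γ j| ^ p) :=
      (Real.continuous_exp.comp
        (((continuous_id.div_const (γ j)).abs.rpow_const fun _ => Or.inr hp0.le).neg))
    exact this.measurable
  have h0Eh : ∀ j x, 0 ≤ Eh j x := fun j x => (Real.exp_pos _).le
  have h1Eh : ∀ j x, Eh j x ≤ 1 := fun j x => by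
    rw [hEh]
    exact Real.exp_le_one_iff.2 (neg_nonpos.2 (Real.rpow_nonneg (abs_nonneg _) _))
  have h0E0 : ∀ j x, 0 ≤ E0 j x := fun j x => (Real.exp_pos _).le
  have h1E0 : ∀ j x, E0 j x ≤ 1 := fun j x => by
    rw [hE0]
    exact Real.exp_le_one_iff.2 (neg_nonpos.2 (Real.rpow_nonneg (abs_nonneg _) _))
  -- rewrite Vr's as C * Ifn
  have habs : ∀ (j : Fin c) (y : ℝ), |(γ j)⁻¹ * y| = |y / γ j| := fun j y => by
    rw [inv_mul_eq_div]
  have hVrh : Vr p r α₁ α₂ (fun j x => (γ j)⁻¹ * ρ ((γ j)⁻¹ * x)) h₂ =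
      C * Ifn p r α₁ α₂ Eh := by
    rw [Vr_eq_Ifn]
    unfold Ifn
    rw [← integral_const_mul]
    refine integral_congr_ae (Filter.Eventually.of_forall fun u => ?_)
    simp only [hρ, habs, hEh]
    rw [← mul_assoc]
    congr 1
    rw [hC, ← Finset.prod_mul_distrib]
    refine Finset.prod_congr rfl fun j _ => ?_
    ring
  have hVr0 : Vr p r α₁ α₂ (fun j x => (γ j)⁻¹ * ρ ((γ j)⁻¹ * x)) 0 =
      C * Ifn p r α₁ α₂ E0 := by
    rw [Vr_eq_Ifn]
    unfold Ifn
    rw [← integral_const_mul]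
    refine integral_congr_ae (Filter.Eventually.of_forall fun u => ?_)
    simp only [hρ, habs, hE0, Pi.zero_apply, add_zero]
    rw [← mul_assoc]
    congr 1
    rw [hC, ← Finset.prod_mul_distrib]
    refine Finset.prod_congr rfl fun j _ => ?_
    ring
  -- symmetrization
  have hsym := all_sym (r := r) hp0 hα₁ hα₂ Eh hmEh h0Eh h1Eh
  set symEh : Fin c → ℝ → ℝ := fun j x => (Eh j x + Eh j (-x)) / 2 with hsymEh
  have hmsym : ∀ j, Measurable (symEh j) := fun j =>
    ((hmEh j).add ((hmEh j).comp measurable_neg)).div_const 2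
  have h0sym : ∀ j x, 0 ≤ symEh j x := fun j x => by
    rw [hsymEh]
    have := h0Eh j x; have := h0Eh j (-x); positivity
  have h1sym : ∀ j x, symEh j x ≤ 1 := fun j x => by
    rw [hsymEh]
    have := h1Eh j x; have := h1Eh j (-x)
    dsimp only
    linarith
  -- pointwise comparison
  have hpt : ∀ (j : Fin c) (x : ℝ),
      Real.exp (-|h₂ j / γ j| ^ p) * E0 j x ≤ symEh j x := by
    intro j x
    have h2p := my_two_point hp hp2 (x / γ j) (h₂ j / γ j)
    rw [hsymEh, hE0]
    dsimp only
    rw [hEh]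
    dsimp only
    have e1 : (x + h₂ j) / γ j = x / γ j + h₂ j / γ j := add_div _ _ _
    have e2 : |(-x + h₂ j) / γ j| = |x / γ j - h₂ j / γ j| := by
      rw [show (-x + h₂ j) = -(x - h₂ j) from by ring, neg_div, abs_neg, sub_div]
    rw [e1, e2] at *
    calc Real.exp (-|h₂ j / γ j| ^ p) * Real.exp (-|x / γ j| ^ p)
        ≤ (Real.exp (-|x / γ j + h₂ j / γ j| ^ p) +
            Real.exp (-|x / γ j - h₂ j / γ j| ^ p)) / 2 := h2p
      _ = _ := by rw [e2]
  -- integral comparison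
  set P : ℝ := ∏ j, Real.exp (-|h₂ j / γ j| ^ p) with hP
  have hP0 : 0 ≤ P := Finset.prod_nonneg fun j _ => (Real.exp_pos _).le
  have hineq : P * Ifn p r α₁ α₂ E0 ≤ Ifn p r α₁ α₂ symEh := by
    unfold Ifn
    rw [← integral_const_mul]
    refine integral_mono ?_ ?_ ?_
    · exact (integrableOn_I (r := r) hp0 hα₁ hα₂ E0 hmE0 h0E0 h1E0).const_mul P
    · exact integrableOn_I (r := r) hp0 hα₁ hα₂ symEh hmsym h0sym h1sym
    · intro u
      dsimp only
      rw [← mul_assoc]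
      refine mul_le_mul_of_nonneg_right ?_ (Wfn_nonneg u)
      rw [hP, ← Finset.prod_mul_distrib]
      exact Finset.prod_le_prod
        (fun j _ => mul_nonneg (Real.exp_pos _).le (h0E0 j _))
        (fun j _ => hpt j (u j))
  rw [hVrh, hVr0, hsym]
  calc C * Ifn p r α₁ α₂ E0 * P = C * (P * Ifn p r α₁ α₂ E0) := by ring
    _ ≤ C * Ifn p r α₁ α₂ symEh := mul_le_mul_of_nonneg_left hineq hC0
end
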